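/- arXiv:1012.4754 — 10 statements merged into one kernel-verified Lean document; each statement's English description precedes it below -/
import Mathlib

section
/- For strictly positive real numbers λ₁,…,λₙ, the matrix T with entries T_ij = (log λ_i − log λ_j)/(λ_i − λ_j) for λ_i ≠ λ_j and T_ii = 1/λ_i is positive semidefinite. -/
open MeasureTheory Set Filter Real

lemma tendsto_logdiff (a b : ℝ) :
    Tendsto (fun s : ℝ => Real.log (s+a) - Real.log (s+b)) atTop (nhds 0) := by
  have h1 : Tendsto (fun s : ℝ => (s+a)/(s+b)) atTop (nhds 1) := by
    have : ∀ᶠ s : ℝ in atTop, (s+a)/(s+b) = 1 + (a-b)/(s+b) := by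
      filter_upwards [eventually_gt_atTop (max 0 (-b))] with s hs
      have hsb : s + b ≠ 0 := by
        have := lt_of_le_of_lt (le_max_right 0 (-b)) hs; linarith
      field_simp
      ring
    rw [tendsto_congr' this]
    have : Tendsto (fun s : ℝ => (a-b)/(s+b)) atTop (nhds 0) := by
      apply Tendsto.div_atTop tendsto_const_nhds
      exact tendsto_atTop_add_const_right _ _ tendsto_id
    simpa using tendsto_const_nhds.add this
  have h2 : ∀ᶠ s : ℝ in atTop, Real.log (s+a) - Real.log (s+b) = Real.log ((s+a)/(s+b)) := by
    filter_upwards [eventually_gt_atTop (max (-a) (-b))] with s hs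
    have h1 : s + a > 0 := by have := lt_of_le_of_lt (le_max_left (-a) (-b)) hs; linarith
    have h2 : s + b > 0 := by have := lt_of_le_of_lt (le_max_right (-a) (-b)) hs; linarith
    rw [Real.log_div (ne_of_gt h1) (ne_of_gt h2)]
  rw [tendsto_congr' h2]
  have := (Real.continuousAt_log (by norm_num : (1:ℝ) ≠ 0)).tendsto.comp h1
  simpa [Function.comp_def] using this

lemma key (a b : ℝ) (ha : 0 < a) (hb : 0 < b) :
    IntegrableOn (fun s : ℝ => (s+a)⁻¹ * (s+b)⁻¹) (Ioi 0) ∧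
    ∫ s in Ioi (0:ℝ), (s+a)⁻¹ * (s+b)⁻¹ =
      (if a = b then 1/a else (Real.log a - Real.log b)/(a-b)) := by
  have pos : ∀ x ∈ Ioi (0:ℝ), 0 ≤ (x+a)⁻¹ * (x+b)⁻¹ := by
    intro x hx
    have : (0:ℝ) < x := hx
    positivity
  rcases eq_or_ne a b with rfl | hab
  · -- a = b : antiderivative -(s+a)⁻¹
    have hderiv : ∀ x ∈ Ici (0:ℝ), HasDerivAt (fun s : ℝ => -(s+a)⁻¹) ((x+a)⁻¹ * (x+a)⁻¹) x := by
      intro x hx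
      have hxa : x + a ≠ 0 := by have : (0:ℝ) ≤ x := hx; positivity
      have h1 : HasDerivAt (fun s : ℝ => s + a) 1 x := (hasDerivAt_id x).add_const a
      have h2 := (h1.inv hxa).neg
      convert h2 using 1
      rfl
      rfl
      rfl
      simp only [neg_div, neg_neg, one_div, ← inv_pow]
      ring
    have htend : Tendsto (fun s : ℝ => -(s+a)⁻¹) atTop (nhds 0) := by
      have : Tendsto (fun s : ℝ => s + a) atTop atTop := tendsto_atTop_add_const_right _ _ tendsto_id
      simpa using (this.inv_tendsto_atTop).neg
    refine ⟨integrableOn_Ioi_deriv_of_nonneg' hderiv pos htend, ?_⟩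
    rw [integral_Ioi_of_hasDerivAt_of_nonneg' hderiv pos htend]
    simp [one_div]
  · -- a ≠ b
    have hderiv : ∀ x ∈ Ici (0:ℝ),
        HasDerivAt (fun s : ℝ => (b-a)⁻¹ * (Real.log (s+a) - Real.log (s+b)))
          ((x+a)⁻¹ * (x+b)⁻¹) x := by
      intro x hx
      have hx0 : (0:ℝ) ≤ x := hx
      have hxa : (0:ℝ) < x + a := by linarith
      have hxb : (0:ℝ) < x + b := by linarith
      have h1 : HasDerivAt (fun s : ℝ => Real.log (s+a)) ((x+a)⁻¹) x := by
        have := (Real.hasDerivAt_log hxa.ne').comp x ((hasDerivAt_id x).add_const a)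
        simpa [Function.comp_def] using this
      have h2 : HasDerivAt (fun s : ℝ => Real.log (s+b)) ((x+b)⁻¹) x := by
        have := (Real.hasDerivAt_log hxb.ne').comp x ((hasDerivAt_id x).add_const b)
        simpa [Function.comp_def] using this
      have h3 := ((h1.sub h2).const_mul ((b-a)⁻¹))
      convert h3 using 1
      have hba : b - a ≠ 0 := sub_ne_zero.mpr (Ne.symm hab)
      rfl
      rfl
      rfl
      field_simp
      ring
    have htend : Tendsto (fun s : ℝ => (b-a)⁻¹ * (Real.log (s+a) - Real.log (s+b)))
        atTop (nhds 0) := by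
      simpa using (tendsto_logdiff a b).const_mul ((b-a)⁻¹)
    refine ⟨integrableOn_Ioi_deriv_of_nonneg' hderiv pos htend, ?_⟩
    rw [integral_Ioi_of_hasDerivAt_of_nonneg' hderiv pos htend]
    rw [if_neg hab]
    have hba : b - a ≠ 0 := sub_ne_zero.mpr (Ne.symm hab)
    have hab' : a - b ≠ 0 := sub_ne_zero.mpr hab
    simp only [zero_add]
    field_simp
    ring

theorem stmt_3 (n : ℕ) (lam : Fin n → ℝ) (hlam : ∀ i, 0 < lam i) :
    Matrix.PosSemidef (Matrix.of fun i j : Fin n =>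
      if lam i = lam j then 1 / lam i
      else (Real.log (lam i) - Real.log (lam j)) / (lam i - lam j)) := by
  set M : Matrix (Fin n) (Fin n) ℝ := Matrix.of fun i j : Fin n =>
      if lam i = lam j then 1 / lam i
      else (Real.log (lam i) - Real.log (lam j)) / (lam i - lam j) with hM
  have hentry : ∀ i j, M i j = ∫ s in Ioi (0:ℝ), (s + lam i)⁻¹ * (s + lam j)⁻¹ := by
    intro i j
    rw [(key (lam i) (lam j) (hlam i) (hlam j)).2]
    simp [hM]
  rw [Matrix.posSemidef_iff_dotProduct_mulVec]
  constructor
  · -- Hermitian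
    ext i j
    simp only [Matrix.conjTranspose_apply, star_trivial]
    rw [hentry, hentry]
    congr 1
    ext s
    ring
  · intro x
    simp only [star_trivial, dotProduct, Matrix.mulVec, dotProduct]
    have hint : ∀ i j : Fin n, Integrable
        (fun s : ℝ => x i * ((s + lam i)⁻¹ * (s + lam j)⁻¹ * x j))
        (volume.restrict (Ioi 0)) := by
      intro i j
      have h := ((key (lam i) (lam j) (hlam i) (hlam j)).1).const_mul (x i * x j)
      exact h.congr (Filter.EventuallyEq.of_eq (funext fun s => by ring))
    have : ∑ i, x i * ∑ j, M i j * x j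
        = ∫ s in Ioi (0:ℝ), ∑ i, ∑ j, x i * ((s + lam i)⁻¹ * (s + lam j)⁻¹ * x j) := by
      rw [integral_finset_sum]
      · congr 1
        ext i
        rw [integral_finset_sum _ (fun j _ => hint i j)]
        rw [Finset.mul_sum]
        congr 1
        ext j
        rw [hentry]
        rw [← integral_mul_const, ← integral_const_mul]
      · intro i _
        exact integrable_finset_sum _ (fun j _ => hint i j)
    rw [this]
    apply integral_nonneg
    intro s
    have : ∑ i, ∑ j, x i * ((s + lam i)⁻¹ * (s + lam j)⁻¹ * x j)
        = (∑ i, x i * (s + lam i)⁻¹)^2 := by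
      rw [sq, Finset.sum_mul_sum]
      congr 1; ext i; congr 1; ext j; ring
    simp only [this]
    positivity
end

section
/- For 0 < t < 1 and strictly positive reals λ₁,…,λₙ, the matrix T with entries T_ij = 2/(λ_i^t λ_j^{1-t} + λ_i^{1-t} λ_j^t) is positive semidefinite. -/
open MeasureTheory Real Set

lemma aux_integral {r : ℝ} (hr : 0 < r) :
    ∫ s in Ioi (0:ℝ), Real.exp (-(r * s)) = 1 / r := by
  have := Real.integral_rpow_mul_exp_neg_mul_Ioi (a := 1) one_pos hr
  rw [Real.Gamma_one, mul_one, Real.rpow_one] at this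
  rw [← this]
  refine setIntegral_congr_fun measurableSet_Ioi (fun s hs => ?_)
  rw [sub_self, Real.rpow_zero]; ring

lemma cauchy_like_psd {n : ℕ} (μ d : Fin n → ℝ) (hμ : ∀ i, 0 < μ i) :
    Matrix.PosSemidef (Matrix.of fun i j : Fin n => d i * d j / (μ i + μ j)) := by
  rw [Matrix.posSemidef_iff_dotProduct_mulVec]
  constructor
  · ext i j
    simp only [Matrix.conjTranspose_apply, Matrix.of_apply, star_trivial]
    rw [add_comm, mul_comm]
  · intro x
    set c : Fin n → ℝ := fun i => x i * d i with hc
    have key : ∀ i j : Fin n,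
        c i * c j / (μ i + μ j) = ∫ s in Ioi (0:ℝ), c i * c j * Real.exp (-((μ i + μ j) * s)) := by
      intro i j
      rw [MeasureTheory.integral_const_mul, aux_integral (add_pos (hμ i) (hμ j)), mul_one_div]
    have hint : ∀ i j : Fin n,
        IntegrableOn (fun s => c i * c j * Real.exp (-((μ i + μ j) * s))) (Ioi (0:ℝ)) := by
      intro i j
      have := (exp_neg_integrableOn_Ioi 0 (b := μ i + μ j) (add_pos (hμ i) (hμ j))).const_mul (c i * c j)
      simp only [neg_mul] at this
      exact this
    have hquad : dotProduct (star x) ((Matrix.of fun i j : Fin n =>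
        d i * d j / (μ i + μ j)).mulVec x)
        = ∫ s in Ioi (0:ℝ), (∑ i, c i * Real.exp (-(μ i * s))) ^ 2 := by
      have hexp : ∀ s : ℝ, (∑ i, c i * Real.exp (-(μ i * s))) ^ 2
          = ∑ i, ∑ j, c i * c j * Real.exp (-((μ i + μ j) * s)) := by
        intro s
        rw [sq, Finset.sum_mul_sum]
        refine Finset.sum_congr rfl fun i _ => Finset.sum_congr rfl fun j _ => ?_
        rw [show -((μ i + μ j)*s) = -(μ i*s) + -(μ j*s) by ring, Real.exp_add]
        ring
      calc dotProduct (star x) ((Matrix.of fun i j : Fin n =>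
            d i * d j / (μ i + μ j)).mulVec x)
          = ∑ i, ∑ j, c i * c j / (μ i + μ j) := by
            simp only [dotProduct, Matrix.mulVec, dotProduct, Matrix.of_apply,
              star_trivial, Finset.mul_sum]
            refine Finset.sum_congr rfl fun i _ => Finset.sum_congr rfl fun j _ => ?_
            simp only [hc]; ring
        _ = ∑ i, ∑ j, ∫ s in Ioi (0:ℝ), c i * c j * Real.exp (-((μ i + μ j) * s)) := by
            refine Finset.sum_congr rfl fun i _ => Finset.sum_congr rfl fun j _ => key i j
        _ = ∫ s in Ioi (0:ℝ), ∑ i, ∑ j, c i * c j * Real.exp (-((μ i + μ j) * s)) := by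
            rw [MeasureTheory.integral_finset_sum]
            · refine Finset.sum_congr rfl fun i _ => ?_
              rw [MeasureTheory.integral_finset_sum]
              exact fun j _ => hint i j
            · exact fun i _ => integrable_finset_sum _ (fun j _ => hint i j)
        _ = ∫ s in Ioi (0:ℝ), (∑ i, c i * Real.exp (-(μ i * s))) ^ 2 := by
            refine (integral_congr_ae (Filter.Eventually.of_forall fun s => ?_)).symm
            exact hexp s
    rw [hquad]
    exact integral_nonneg fun s => sq_nonneg _

theorem stmt_4 (t : ℝ) (ht : 0 < t) (ht1 : t < 1)
    (n : ℕ) (lam : Fin n → ℝ) (hlam : ∀ i, 0 < lam i) :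
    Matrix.PosSemidef (Matrix.of fun i j : Fin n =>
      2 / (lam i ^ t * lam j ^ (1 - t) + lam i ^ (1 - t) * lam j ^ t)) := by
  have h := cauchy_like_psd (fun i => lam i ^ (1 - 2*t))
    (fun i => Real.sqrt 2 * lam i ^ (-t))
    (fun i => Real.rpow_pos_of_pos (hlam i) _)
  convert h using 2
  ext i j
  have hi := hlam i
  have hj := hlam j
  rw [div_eq_div_iff (by positivity) (by positivity)]
  have e1 : Real.sqrt 2 * lam i ^ (-t) * (Real.sqrt 2 * lam j ^ (-t))
      = 2 * (lam i ^ (-t) * lam j ^ (-t)) := by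
    rw [show Real.sqrt 2 * lam i ^ (-t) * (Real.sqrt 2 * lam j ^ (-t))
        = (Real.sqrt 2 * Real.sqrt 2) * (lam i ^ (-t) * lam j ^ (-t)) by ring,
      Real.mul_self_sqrt (by norm_num)]
  rw [e1, mul_add, mul_add]
  have h1 : lam i ^ t * lam j ^ (1-t) * (2 * (lam i ^ (-t) * lam j ^ (-t)))
      = 2 * lam j ^ (1 - 2*t) := by
    rw [show lam i ^ t * lam j ^ (1-t) * (2 * (lam i ^ (-t) * lam j ^ (-t)))
        = 2 * ((lam i ^ t * lam i ^ (-t)) * (lam j ^ (1-t) * lam j ^ (-t))) by ring,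
      ← Real.rpow_add (hlam i), ← Real.rpow_add (hlam j),
      show t + -t = (0:ℝ) by ring, show (1:ℝ)-t + -t = 1-2*t by ring,
      Real.rpow_zero]; ring
  have h2 : lam i ^ (1-t) * lam j ^ t * (2 * (lam i ^ (-t) * lam j ^ (-t)))
      = 2 * lam i ^ (1 - 2*t) := by
    rw [show lam i ^ (1-t) * lam j ^ t * (2 * (lam i ^ (-t) * lam j ^ (-t)))
        = 2 * ((lam i ^ (1-t) * lam i ^ (-t)) * (lam j ^ t * lam j ^ (-t))) by ring,
      ← Real.rpow_add (hlam i), ← Real.rpow_add (hlam j),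
      show t + -t = (0:ℝ) by ring, show (1:ℝ)-t + -t = 1-2*t by ring,
      Real.rpow_zero]; ring
  linear_combination -h1 - h2
end

section
/- For 0 < t < 1/2 and strictly positive reals λ₁,…,λₙ, the matrix T with entries T_ij = 2^{1-2t} (λ_i + λ_j)^{-(1-2t)} (λ_i λ_j)^{-t} is positive semidefinite. -/
open MeasureTheory Real Set
open scoped Matrix

theorem stmt_7 (t : ℝ) (ht : 0 < t) (ht1 : t < 1 / 2)
    (n : ℕ) (lam : Fin n → ℝ) (hlam : ∀ i, 0 < lam i) :
    Matrix.PosSemidef (Matrix.of fun i j : Fin n =>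
      (2 : ℝ) ^ (1 - 2 * t) * (lam i + lam j) ^ (-(1 - 2 * t)) * (lam i * lam j) ^ (-t)) := by
  set s : ℝ := 1 - 2 * t with hs_def
  have hs : 0 < s := by simp [hs_def]; linarith
  have hΓ : 0 < Real.Gamma s := Real.Gamma_pos_of_pos hs
  have base : ∀ r : ℝ, 0 < r →
      IntegrableOn (fun u : ℝ => u ^ (s - 1) * Real.exp (-(r * u))) (Ioi 0) := by
    intro r hr
    have h := integrableOn_rpow_mul_exp_neg_mul_rpow
      (by linarith : (-1 : ℝ) < s - 1) (by norm_num : (0:ℝ) < 1) hr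
    refine h.congr_fun (fun u _ => ?_) measurableSet_Ioi
    dsimp only
    rw [Real.rpow_one, neg_mul]
  rw [Matrix.posSemidef_iff_dotProduct_mulVec]
  constructor
  · ext i j
    simp only [Matrix.conjTranspose_apply, Matrix.of_apply, star_trivial]
    rw [add_comm (lam j), mul_comm (lam j)]
  · intro x
    simp only [star_trivial]
    set g : Fin n → ℝ → ℝ := fun i u => x i * (lam i) ^ (-t) * Real.exp (-(lam i * u))
      with hg_def
    have hfun : ∀ i j : Fin n, (fun u : ℝ => u ^ (s - 1) * (g i u * g j u)) =
        fun u : ℝ => (x i * (lam i) ^ (-t) * (x j * (lam j) ^ (-t))) *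
          (u ^ (s - 1) * Real.exp (-((lam i + lam j) * u))) := by
      intro i j
      funext u
      have he : Real.exp (-(lam i * u)) * Real.exp (-(lam j * u))
          = Real.exp (-((lam i + lam j) * u)) := by
        rw [← Real.exp_add]; ring_nf
      simp only [hg_def]
      linear_combination (x i * (lam i) ^ (-t) * (x j * (lam j) ^ (-t)) * u ^ (s - 1)) * he
    have hint : ∀ i j : Fin n,
        IntegrableOn (fun u : ℝ => u ^ (s - 1) * (g i u * g j u)) (Ioi 0) := by
      intro i j
      rw [hfun i j]
      exact (base _ (by have := hlam i; have := hlam j; linarith)).const_mul _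
    have key : ∀ i j : Fin n, x i * ((2 : ℝ) ^ s * (lam i + lam j) ^ (-s) *
        (lam i * lam j) ^ (-t) * x j) =
        (2 : ℝ) ^ s / Real.Gamma s *
          ∫ u in Ioi 0, u ^ (s - 1) * (g i u * g j u) := by
      intro i j
      have hij : 0 < lam i + lam j := by have := hlam i; have := hlam j; linarith
      rw [hfun i j, integral_const_mul, integral_rpow_mul_exp_neg_mul_Ioi hs hij]
      have h1 : ((1 : ℝ) / (lam i + lam j)) ^ s = (lam i + lam j) ^ (-s) := by
        rw [one_div, Real.inv_rpow hij.le, ← Real.rpow_neg hij.le]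
      have h2 : (lam i * lam j) ^ (-t) = lam i ^ (-t) * lam j ^ (-t) :=
        Real.mul_rpow (hlam i).le (hlam j).le
      rw [h1, h2]
      field_simp
    have expand : x ⬝ᵥ (Matrix.of fun i j : Fin n =>
        (2 : ℝ) ^ s * (lam i + lam j) ^ (-s) * (lam i * lam j) ^ (-t)) *ᵥ x
        = ∑ i, ∑ j, x i * ((2 : ℝ) ^ s * (lam i + lam j) ^ (-s) *
            (lam i * lam j) ^ (-t) * x j) := by
      simp [dotProduct, Matrix.mulVec, Finset.mul_sum]
    rw [expand]
    simp_rw [key, ← Finset.mul_sum]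
    have swap : ∑ i, ∑ j, (∫ u in Ioi 0, u ^ (s - 1) * (g i u * g j u))
        = ∫ u in Ioi 0, ∑ i, ∑ j, u ^ (s - 1) * (g i u * g j u) := by
      rw [integral_finset_sum _ (fun i _ => integrable_finset_sum _ (fun j _ => hint i j))]
      exact Finset.sum_congr rfl fun i _ =>
        (integral_finset_sum _ (fun j _ => hint i j)).symm
    rw [swap]
    refine mul_nonneg (by positivity) (setIntegral_nonneg measurableSet_Ioi fun u hu => ?_)
    have hsum : ∑ i, ∑ j, u ^ (s - 1) * (g i u * g j u)
        = u ^ (s - 1) * (∑ i, g i u) ^ 2 := by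
      rw [sq, Finset.sum_mul_sum]
      simp_rw [Finset.mul_sum]
    rw [hsum]
    exact mul_nonneg (Real.rpow_nonneg (le_of_lt hu) _) (sq_nonneg _)
end

section
/- For 0 < t < 1 and all x > 0 with x ≠ 1, t(1-t)(x-1)² / ((x^t - 1)(x^{1-t} - 1)) ≥ √x. -/
open Real

lemma sinh_convexOn : ConvexOn ℝ (Set.Ici (0:ℝ)) Real.sinh := by
  apply convexOn_of_deriv2_nonneg (convex_Ici 0) Real.continuous_sinh.continuousOn
    Real.differentiable_sinh.differentiableOn
  · rw [Real.deriv_sinh]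
    exact Real.differentiable_cosh.differentiableOn
  · intro x hx
    rw [interior_Ici, Set.mem_Ioi] at hx
    have h2 : deriv^[2] Real.sinh = Real.sinh := by
      ext y; simp [Function.iterate_succ_apply', Real.deriv_sinh, Real.deriv_cosh]
    rw [h2]
    exact (Real.sinh_pos_iff.2 hx).le

lemma sinh_mul_le {t s : ℝ} (ht0 : 0 ≤ t) (ht1 : t ≤ 1) (hs : 0 ≤ s) :
    Real.sinh (t * s) ≤ t * Real.sinh s := by
  have h := sinh_convexOn.2 (Set.mem_Ici.2 hs) (Set.mem_Ici.2 le_rfl) ht0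
    (by linarith : (0:ℝ) ≤ 1 - t) (by ring)
  simpa using h

lemma aux_exp (y : ℝ) : Real.exp y - 1 = 2 * Real.exp (y/2) * Real.sinh (y/2) := by
  rw [Real.sinh_eq, Real.exp_neg]
  have h : Real.exp (y/2) * Real.exp (y/2) = Real.exp y := by
    rw [← Real.exp_add]; ring_nf
  have hp := (Real.exp_pos (y/2)).ne'
  field_simp
  linear_combination (-1) * h

lemma key_sinh_nonneg {t s : ℝ} (ht0 : 0 ≤ t) (ht1 : t ≤ 1) (hs : 0 ≤ s) :
    Real.sinh (t * s) * Real.sinh ((1 - t) * s) ≤ t * (1 - t) * Real.sinh s ^ 2 := by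
  have h1 := sinh_mul_le ht0 ht1 hs
  have h2 := sinh_mul_le (by linarith : (0:ℝ) ≤ 1 - t) (by linarith : 1 - t ≤ 1) hs
  have hs' : 0 ≤ Real.sinh s := Real.sinh_nonneg_iff.2 hs
  have hA : 0 ≤ Real.sinh (t * s) := Real.sinh_nonneg_iff.2 (mul_nonneg ht0 hs)
  have hB : 0 ≤ Real.sinh ((1 - t) * s) :=
    Real.sinh_nonneg_iff.2 (mul_nonneg (by linarith) hs)
  calc Real.sinh (t * s) * Real.sinh ((1 - t) * s)
      ≤ (t * Real.sinh s) * ((1 - t) * Real.sinh s) :=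
        mul_le_mul h1 h2 hB (mul_nonneg ht0 hs')
    _ = t * (1 - t) * Real.sinh s ^ 2 := by ring

lemma key_sinh {t : ℝ} (s : ℝ) (ht0 : 0 ≤ t) (ht1 : t ≤ 1) :
    Real.sinh (t * s) * Real.sinh ((1 - t) * s) ≤ t * (1 - t) * Real.sinh s ^ 2 := by
  rcases le_total 0 s with hs | hs
  · exact key_sinh_nonneg ht0 ht1 hs
  · have h := key_sinh_nonneg ht0 ht1 (by linarith : (0:ℝ) ≤ -s)
    simpa [mul_neg, Real.sinh_neg, neg_mul, neg_neg] using h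

theorem stmt_9 (t : ℝ) (ht : 0 < t) (ht1 : t < 1) (x : ℝ) (hx : 0 < x) (hx1 : x ≠ 1) :
    Real.sqrt x ≤ t * (1 - t) * (x - 1) ^ 2 / ((x ^ t - 1) * (x ^ (1 - t) - 1)) := by
  set L := Real.log x with hLdef
  have hL : L ≠ 0 := fun h => hx1 (by rw [← Real.exp_log hx, ← hLdef, h, Real.exp_zero])
  have hxt : x ^ t = Real.exp (t * L) := by rw [Real.rpow_def_of_pos hx, mul_comm]
  have hxt' : x ^ (1 - t) = Real.exp ((1 - t) * L) := by
    rw [Real.rpow_def_of_pos hx, mul_comm]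
  have hxe : x = Real.exp L := (Real.exp_log hx).symm
  have hsq : Real.sqrt x = Real.exp (L / 2) := by
    rw [Real.sqrt_eq_rpow, Real.rpow_def_of_pos hx]
    congr 1; ring
  have e1 : t * L / 2 = t * (L / 2) := by ring
  have e2 : (1 - t) * L / 2 = (1 - t) * (L / 2) := by ring
  have hP : 0 < Real.sinh (t * (L / 2)) * Real.sinh ((1 - t) * (L / 2)) := by
    rcases hL.lt_or_gt with h | h
    · exact mul_pos_of_neg_of_neg (Real.sinh_neg_iff.2 (by nlinarith))
        (Real.sinh_neg_iff.2 (by nlinarith))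
    · exact mul_pos (Real.sinh_pos_iff.2 (by nlinarith))
        (Real.sinh_pos_iff.2 (by nlinarith))
  have hden : 0 < (x ^ t - 1) * (x ^ (1 - t) - 1) := by
    rw [hxt, hxt', aux_exp, aux_exp, e1, e2]
    have heq : 2 * Real.exp (t * (L / 2)) * Real.sinh (t * (L / 2)) *
        (2 * Real.exp ((1 - t) * (L / 2)) * Real.sinh ((1 - t) * (L / 2))) =
        4 * Real.exp (t * (L / 2)) * Real.exp ((1 - t) * (L / 2)) *
        (Real.sinh (t * (L / 2)) * Real.sinh ((1 - t) * (L / 2))) := by ring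
    rw [heq]
    have h4 : 0 < 4 * Real.exp (t * (L / 2)) * Real.exp ((1 - t) * (L / 2)) := by positivity
    exact mul_pos h4 hP
  rw [le_div_iff₀ hden]
  rw [hsq, hxt, hxt']
  nth_rewrite 1 [hxe]
  rw [aux_exp, aux_exp, aux_exp, e1, e2]
  have hE : Real.exp (t * (L / 2)) * Real.exp ((1 - t) * (L / 2)) = Real.exp (L / 2) := by
    rw [← Real.exp_add]; congr 1; ring
  have key' := key_sinh (t := t) (L / 2) ht.le ht1.le
  calc Real.exp (L / 2) * (2 * Real.exp (t * (L / 2)) * Real.sinh (t * (L / 2)) *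
        (2 * Real.exp ((1 - t) * (L / 2)) * Real.sinh ((1 - t) * (L / 2))))
      = 4 * Real.exp (L / 2) ^ 2 *
        (Real.sinh (t * (L / 2)) * Real.sinh ((1 - t) * (L / 2))) := by
        linear_combination 4 * Real.sinh (t * (L / 2)) * Real.sinh ((1 - t) * (L / 2)) *
          Real.exp (L / 2) * hE
    _ ≤ 4 * Real.exp (L / 2) ^ 2 * (t * (1 - t) * Real.sinh (L / 2) ^ 2) := by
        exact mul_le_mul_of_nonneg_left key' (by positivity)
    _ = t * (1 - t) * (2 * Real.exp (L / 2) * Real.sinh (L / 2)) ^ 2 := by ring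
end

section
/- For strictly positive reals λ₁,…,λₙ, the matrix U with entries U_ij = 1/(√λ_i + √λ_j) is positive semidefinite, and consequently the matrix T with entries T_ij = 4/(√λ_i + √λ_j)² is positive semidefinite. -/
open MeasureTheory Real Set

lemma cauchy_pow_quadform_nonneg {n : ℕ} (a : ℝ) (ha : 0 < a) (b : Fin n → ℝ)
    (hb : ∀ i, 0 < b i) (x : Fin n → ℝ) :
    0 ≤ ∑ i, ∑ j, x i * x j * ((1 : ℝ) / (b i + b j)) ^ a := by
  have hΓ : 0 < Real.Gamma a := Real.Gamma_pos_of_pos ha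
  rw [← mul_nonneg_iff_of_pos_right hΓ, Finset.sum_mul]
  have hint : ∀ i j : Fin n, IntegrableOn
      (fun t : ℝ => x i * x j * (t ^ (a - 1) * Real.exp (-((b i + b j) * t)))) (Ioi 0) := by
    intro i j
    apply Integrable.const_mul
    have := integrableOn_rpow_mul_exp_neg_mul_rpow (p := 1) (s := a - 1) (b := b i + b j)
      (by linarith) zero_lt_one (by have := hb i; have := hb j; linarith)
    refine this.congr_fun (fun t ht => ?_) measurableSet_Ioi
    simp only [Real.rpow_one]
    ring_nf
  have key : ∀ i j : Fin n, x i * x j * ((1 : ℝ) / (b i + b j)) ^ a * Real.Gamma a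
      = ∫ t in Ioi (0 : ℝ), x i * x j * (t ^ (a - 1) * Real.exp (-((b i + b j) * t))) := by
    intro i j
    rw [MeasureTheory.integral_const_mul,
      Real.integral_rpow_mul_exp_neg_mul_Ioi ha (by have := hb i; have := hb j; linarith)]
    ring
  calc (0 : ℝ) ≤ ∫ t in Ioi (0 : ℝ), ∑ i, ∑ j,
        x i * x j * (t ^ (a - 1) * Real.exp (-((b i + b j) * t))) := by
        refine MeasureTheory.setIntegral_nonneg measurableSet_Ioi (fun t ht => ?_)
        have h1 : ∑ i, ∑ j, x i * x j * (t ^ (a - 1) * Real.exp (-((b i + b j) * t)))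
            = t ^ (a - 1) * (∑ i, x i * Real.exp (-(b i * t))) ^ 2 := by
          rw [sq, Finset.sum_mul_sum, Finset.mul_sum]
          refine Finset.sum_congr rfl fun i _ => ?_
          rw [Finset.mul_sum]
          refine Finset.sum_congr rfl fun j _ => ?_
          rw [show -((b i + b j) * t) = -(b i * t) + -(b j * t) by ring, Real.exp_add]
          ring
        rw [h1]
        have := Real.rpow_nonneg (le_of_lt ht) (a - 1)
        positivity
      _ = ∑ i, ∑ j, ∫ t in Ioi (0 : ℝ),
        x i * x j * (t ^ (a - 1) * Real.exp (-((b i + b j) * t))) := by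
        rw [MeasureTheory.integral_finset_sum _ (fun i _ =>
          MeasureTheory.integrable_finset_sum _ (fun j _ => hint i j))]
        exact Finset.sum_congr rfl fun i _ =>
          MeasureTheory.integral_finset_sum _ (fun j _ => hint i j)
      _ = ∑ i, (∑ j, x i * x j * ((1 : ℝ) / (b i + b j)) ^ a) * Real.Gamma a := by
        simp_rw [← key, Finset.sum_mul]

theorem stmt_11 (n : ℕ) (lam : Fin n → ℝ) (hlam : ∀ i, 0 < lam i) :
    Matrix.PosSemidef (Matrix.of fun i j : Fin n =>
      1 / (Real.sqrt (lam i) + Real.sqrt (lam j))) ∧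
    Matrix.PosSemidef (Matrix.of fun i j : Fin n =>
      4 / (Real.sqrt (lam i) + Real.sqrt (lam j)) ^ 2) := by
  set b : Fin n → ℝ := fun i => Real.sqrt (lam i) with hbdef
  have hb : ∀ i, 0 < b i := fun i => Real.sqrt_pos.2 (hlam i)
  constructor
  · rw [Matrix.posSemidef_iff_dotProduct_mulVec]; constructor
    · ext i j
      simp [Matrix.conjTranspose_apply, add_comm]
    · intro x
      have h := cauchy_pow_quadform_nonneg 1 one_pos b hb x
      simp_rw [Real.rpow_one] at h
      simpa [dotProduct, Matrix.mulVec, Finset.mul_sum, mul_assoc, mul_comm,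
        mul_left_comm, one_div] using h
  · rw [Matrix.posSemidef_iff_dotProduct_mulVec]; constructor
    · ext i j
      simp [Matrix.conjTranspose_apply, add_comm]
    · intro x
      have h := cauchy_pow_quadform_nonneg 2 two_pos b hb x
      have h2 : ∀ i j : Fin n, x i * x j * ((1 : ℝ) / (b i + b j)) ^ (2 : ℝ)
          = x i * x j * (1 / (b i + b j) ^ 2) := by
        intro i j
        rw [show ((2 : ℝ)) = ((2 : ℕ) : ℝ) by norm_num, Real.rpow_natCast, div_pow, one_pow]
      simp_rw [h2] at h
      have h4 : 0 ≤ 4 * ∑ i, ∑ j, x i * x j * (1 / (b i + b j) ^ 2) := by linarith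
      simp_rw [Finset.mul_sum] at h4
      simpa [dotProduct, Matrix.mulVec, Finset.mul_sum, mul_assoc, mul_comm,
        mul_left_comm, one_div, div_eq_mul_inv] using h4
end

section
/- For 0 < t < 1 and strictly positive reals λ₁,…,λₙ, the matrix U^(t) with entries U_ij = (λ_i^t − λ_j^t)/(λ_i − λ_j) for λ_i ≠ λ_j and U_ii = t λ_i^{t-1} is positive semidefinite. -/
open MeasureTheory Real Set Filter

/-- Integrability of `s ^ (t-1) / (s + a)` on `(0, ∞)`. -/
lemma lm_intG {t a : ℝ} (ht : 0 < t) (ht1 : t < 1) (ha : 0 < a) :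
    IntegrableOn (fun s : ℝ => s ^ (t - 1) / (s + a)) (Ioi 0) := by
  have hmeas : AEStronglyMeasurable (fun s : ℝ => s ^ (t - 1) / (s + a))
      (volume.restrict (Ioi (0:ℝ))) := by
    apply Measurable.aestronglyMeasurable
    exact (measurable_id.pow_const _).div (measurable_id.add_const a)
  have h1 : IntegrableOn (fun s : ℝ => s ^ (t - 1) / (s + a)) (Ioc 0 1) := by
    have hbase : IntegrableOn (fun s : ℝ => a⁻¹ * s ^ (t - 1)) (Ioc 0 1) := by
      have := (intervalIntegral.intervalIntegrable_rpow' (r := t - 1) (a := 0) (b := 1) (by linarith)).1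
      exact this.const_mul _
    refine Integrable.mono hbase (hmeas.mono_set Ioc_subset_Ioi_self) ?_
    filter_upwards [ae_restrict_mem measurableSet_Ioc] with s hs
    have hs0 : 0 < s := hs.1
    have h1 : 0 ≤ s ^ (t - 1) := rpow_nonneg hs0.le _
    rw [norm_div, norm_mul]
    simp only [Real.norm_eq_abs, abs_of_nonneg h1, abs_of_pos (by linarith : (0:ℝ) < s + a),
      abs_of_pos (inv_pos.mpr ha)]
    rw [div_le_iff₀ (by linarith), inv_mul_eq_div, div_mul_eq_mul_div, le_div_iff₀ ha]
    nlinarith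
  have h2 : IntegrableOn (fun s : ℝ => s ^ (t - 1) / (s + a)) (Ioi 1) := by
    have hbase : IntegrableOn (fun s : ℝ => s ^ (t - 2)) (Ioi 1) :=
      integrableOn_Ioi_rpow_of_lt (by linarith) one_pos
    refine Integrable.mono hbase (hmeas.mono_set (Ioi_subset_Ioi zero_le_one)) ?_
    filter_upwards [ae_restrict_mem measurableSet_Ioi] with s hs
    have hs0 : (0:ℝ) < s := lt_trans one_pos hs
    have h1 : 0 ≤ s ^ (t - 1) := rpow_nonneg hs0.le _
    rw [norm_div]
    simp only [Real.norm_eq_abs, abs_of_nonneg h1, abs_of_pos (by linarith : (0:ℝ) < s + a),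
      abs_of_nonneg (rpow_nonneg hs0.le (t - 2))]
    rw [div_le_iff₀ (by linarith)]
    have : s ^ (t - 2) * s = s ^ (t - 1) := by
      rw [show t - 1 = t - 2 + 1 by ring, rpow_add hs0, rpow_one]
    nlinarith [rpow_nonneg hs0.le (t - 2), mul_le_mul_of_nonneg_left (by linarith : s ≤ s + a)
      (rpow_nonneg hs0.le (t - 2))]
  have := h1.union h2
  refine this.mono_set ?_
  intro s hs
  rcases le_or_gt s 1 with h | h
  · exact Or.inl ⟨hs, h⟩
  · exact Or.inr h

/-- Integrability of the product `(s^(t/2)/(s+a)) * (s^(t/2)/(s+b))` on `(0, ∞)`. -/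
lemma lm_intP {t a b : ℝ} (ht : 0 < t) (ht1 : t < 1) (ha : 0 < a) (hb : 0 < b) :
    IntegrableOn (fun s : ℝ => s ^ (t/2) / (s + a) * (s ^ (t/2) / (s + b))) (Ioi 0) := by
  have hmeas : AEStronglyMeasurable
      (fun s : ℝ => s ^ (t/2) / (s + a) * (s ^ (t/2) / (s + b)))
      (volume.restrict (Ioi (0:ℝ))) := by
    apply Measurable.aestronglyMeasurable
    exact ((measurable_id.pow_const _).div (measurable_id.add_const a)).mul
      ((measurable_id.pow_const _).div (measurable_id.add_const b))
  refine Integrable.mono (lm_intG ht ht1 hb) hmeas ?_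
  filter_upwards [ae_restrict_mem measurableSet_Ioi] with s hs
  have hs0 : (0:ℝ) < s := hs
  have hsa : (0:ℝ) < s + a := by linarith
  have hsb : (0:ℝ) < s + b := by linarith
  have hkey : s ^ (t/2) / (s + a) * (s ^ (t/2) / (s + b)) ≤ s ^ (t - 1) / (s + b) := by
    rw [div_mul_div_comm, div_le_div_iff₀ (by positivity) hsb]
    have h1 : s ^ (t/2) * s ^ (t/2) = s ^ t := by
      rw [← rpow_add hs0]; ring_nf
    have h2 : s * s ^ (t - 1) = s ^ t := by
      have h := Real.rpow_add hs0 1 (t - 1)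
      rw [rpow_one, show (1:ℝ) + (t - 1) = t by ring] at h
      exact h.symm
    calc s ^ (t/2) * s ^ (t/2) * (s + b) = s ^ t * (s + b) := by rw [h1]
      _ = s ^ (t-1) * s * (s + b) := by rw [mul_comm (s ^ (t-1)) s, h2]
      _ ≤ s ^ (t-1) * (s + a) * (s + b) := by
          have h0 : (0:ℝ) ≤ s ^ (t-1) := rpow_nonneg hs0.le _
          have : s ^ (t-1) * s ≤ s ^ (t-1) * (s + a) :=
            mul_le_mul_of_nonneg_left (by linarith) h0
          nlinarith
      _ = s ^ (t-1) * ((s + a) * (s + b)) := by ring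
  have hpos : 0 ≤ s ^ (t/2) / (s + a) * (s ^ (t/2) / (s + b)) := by positivity
  rw [Real.norm_eq_abs, Real.norm_eq_abs, abs_of_nonneg hpos,
    abs_of_nonneg (by positivity : (0:ℝ) ≤ s ^ (t - 1) / (s + b))]
  exact hkey

/-- Scaling for `G`. -/
lemma lm_scaleG {t a : ℝ} (ha : 0 < a) :
    ∫ s in Ioi (0:ℝ), s ^ (t - 1) / (s + a)
      = a ^ (t - 1) * ∫ s in Ioi (0:ℝ), s ^ (t - 1) / (s + 1) := by
  have h := integral_comp_mul_left_Ioi (fun s : ℝ => s ^ (t - 1) / (s + a)) 0 ha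
  rw [mul_zero] at h
  have h2 : ∫ x in Ioi (0:ℝ), (a * x) ^ (t - 1) / (a * x + a)
      = ∫ x in Ioi (0:ℝ), a ^ (t - 2) * (x ^ (t - 1) / (x + 1)) := by
    refine setIntegral_congr_fun measurableSet_Ioi (fun x hx => ?_)
    have hx0 : (0:ℝ) < x := hx
    have hd : a ^ (t - 1) / a = a ^ (t - 2) := by
      have h := Real.rpow_sub ha (t - 1) 1
      rw [rpow_one, show t - 1 - 1 = t - 2 by ring] at h
      exact h.symm
    rw [mul_rpow ha.le hx0.le, show a * x + a = a * (x + 1) by ring, mul_div_mul_comm, hd]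
  simp only [smul_eq_mul] at h
  rw [h2, integral_const_mul] at h
  have ha' : a ≠ 0 := ha.ne'
  have haa : a * a ^ (t - 2) = a ^ (t - 1) := by
    have hq := Real.rpow_add ha 1 (t - 2)
    rw [rpow_one, show (1:ℝ) + (t - 2) = t - 1 by ring] at hq
    exact hq.symm
  rw [← haa, mul_assoc, h, ← mul_assoc, mul_inv_cancel₀ ha', one_mul]

/-- Scaling for `K`. -/
lemma lm_scaleK {t a : ℝ} (ha : 0 < a) :
    ∫ s in Ioi (0:ℝ), s ^ t / (s + a) ^ 2
      = a ^ (t - 1) * ∫ s in Ioi (0:ℝ), s ^ t / (s + 1) ^ 2 := by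
  have h := integral_comp_mul_left_Ioi (fun s : ℝ => s ^ t / (s + a) ^ 2) 0 ha
  rw [mul_zero] at h
  have h2 : ∫ x in Ioi (0:ℝ), (a * x) ^ t / (a * x + a) ^ 2
      = ∫ x in Ioi (0:ℝ), a ^ (t - 2) * (x ^ t / (x + 1) ^ 2) := by
    refine setIntegral_congr_fun measurableSet_Ioi (fun x hx => ?_)
    have hx0 : (0:ℝ) < x := hx
    have hd : a ^ t / a ^ (2:ℕ) = a ^ (t - 2) := by
      have h := Real.rpow_sub ha t 2
      rw [show a ^ (2:ℝ) = a ^ (2:ℕ) by rw [← rpow_natCast a 2]; norm_num] at h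
      exact h.symm
    rw [mul_rpow ha.le hx0.le, show a * x + a = a * (x + 1) by ring, mul_pow,
      mul_div_mul_comm, hd]
  simp only [smul_eq_mul] at h
  rw [h2, integral_const_mul] at h
  have ha' : a ≠ 0 := ha.ne'
  have haa : a * a ^ (t - 2) = a ^ (t - 1) := by
    have hq := Real.rpow_add ha 1 (t - 2)
    rw [rpow_one, show (1:ℝ) + (t - 2) = t - 1 by ring] at hq
    exact hq.symm
  rw [← haa, mul_assoc, h, ← mul_assoc, mul_inv_cancel₀ ha', one_mul]

/-- Integrability of `s^t/(s+a)^2`. -/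
lemma lm_intK {t a : ℝ} (ht : 0 < t) (ht1 : t < 1) (ha : 0 < a) :
    IntegrableOn (fun s : ℝ => s ^ t / (s + a) ^ 2) (Ioi 0) := by
  refine (lm_intP ht ht1 ha ha).congr_fun (fun s hs => ?_) measurableSet_Ioi
  have hs0 : (0:ℝ) < s := hs
  beta_reduce
  rw [div_mul_div_comm, ← rpow_add hs0, ← sq]
  ring_nf

/-- `∫ s^t/(s+1)^2 = t * ∫ s^(t-1)/(s+1)`. -/
lemma lm_ibp {t : ℝ} (ht : 0 < t) (ht1 : t < 1) :
    ∫ s in Ioi (0:ℝ), s ^ t / (s + 1) ^ 2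
      = t * ∫ s in Ioi (0:ℝ), s ^ (t - 1) / (s + 1) := by
  set f : ℝ → ℝ := fun u => u ^ t / (u + 1) with hf
  set f' : ℝ → ℝ := fun u => t * (u ^ (t - 1) / (u + 1)) - u ^ t / (u + 1) ^ 2 with hf'
  have hderiv : ∀ x ∈ Ioi (0:ℝ), HasDerivAt f (f' x) x := by
    intro x hx
    have hx0 : (0:ℝ) < x := hx
    have h1 : HasDerivAt (fun u : ℝ => u ^ t) (t * x ^ (t - 1)) x :=
      Real.hasDerivAt_rpow_const (Or.inl hx0.ne')
    have h2 : HasDerivAt (fun u : ℝ => u + 1) 1 x := (hasDerivAt_id x).add_const 1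
    have hx1 : x + 1 ≠ 0 := by linarith
    have h3 := h1.div h2 hx1
    have h4 : (t * x ^ (t - 1) * (x + 1) - x ^ t * 1) / (x + 1) ^ 2
        = t * (x ^ (t - 1) / (x + 1)) - x ^ t / (x + 1) ^ 2 := by
      rw [mul_one, sub_div, sq, mul_div_mul_right _ _ hx1, mul_div_assoc, ← sq]
    exact h3.congr_deriv h4
  have hcont : ContinuousWithinAt f (Ici 0) 0 := by
    apply ContinuousAt.continuousWithinAt
    apply ContinuousAt.div
    · exact Real.continuousAt_rpow_const 0 t (Or.inr ht.le)
    · exact (continuous_id.add continuous_const).continuousAt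
    · norm_num
  have hG := lm_intG ht ht1 one_pos
  have hK := lm_intK ht ht1 one_pos
  have hint : IntegrableOn f' (Ioi 0) := (hG.const_mul t).sub hK
  have htop : Tendsto f atTop (nhds 0) := by
    have hub : ∀ᶠ u in atTop, f u ≤ u ^ (t - 1) := by
      filter_upwards [eventually_gt_atTop 0] with u hu
      rw [hf]
      have hq : u ^ (t - 1) = u ^ t / u := by
        have h := Real.rpow_sub hu t 1
        rw [rpow_one, show t - 1 = t - 1 by ring] at h
        exact h
      rw [hq]
      apply div_le_div_of_nonneg_left (rpow_nonneg hu.le t) hu (by linarith)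
    have hlb : ∀ᶠ u in atTop, (0:ℝ) ≤ f u := by
      filter_upwards [eventually_gt_atTop 0] with u hu
      have : (0:ℝ) < u + 1 := by linarith
      positivity
    have h0 : Tendsto (fun u : ℝ => u ^ (t - 1)) atTop (nhds 0) := by
      have := tendsto_rpow_neg_atTop (y := 1 - t) (by linarith)
      simpa [neg_sub] using this
    exact tendsto_of_tendsto_of_tendsto_of_le_of_le' tendsto_const_nhds h0 hlb hub
  have key := integral_Ioi_of_hasDerivAt_of_tendsto hcont hderiv hint htop
  have hf0 : f 0 = 0 := by simp [hf, Real.zero_rpow ht.ne']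
  rw [hf0, sub_zero] at key
  have := integral_sub (hG.const_mul t) hK
  rw [show (fun s => t * (s ^ (t-1) / (s + 1)) - s ^ t / (s + 1) ^ 2) = f' from rfl] at this
  rw [key, integral_const_mul] at this
  linarith [this]

/-- The entry formula. -/
lemma lm_entry {t a b : ℝ} (ht : 0 < t) (ht1 : t < 1) (ha : 0 < a) (hb : 0 < b) :
    (if a = b then t * a ^ (t - 1) else (a ^ t - b ^ t) / (a - b))
        * ∫ s in Ioi (0:ℝ), s ^ (t - 1) / (s + 1)
      = ∫ s in Ioi (0:ℝ), s ^ (t/2) / (s + a) * (s ^ (t/2) / (s + b)) := by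
  by_cases hab : a = b
  · subst hab
    rw [if_pos rfl]
    have h1 : ∫ s in Ioi (0:ℝ), s ^ (t/2) / (s + a) * (s ^ (t/2) / (s + a))
        = ∫ s in Ioi (0:ℝ), s ^ t / (s + a) ^ 2 := by
      refine setIntegral_congr_fun measurableSet_Ioi (fun s hs => ?_)
      have hs0 : (0:ℝ) < s := hs
      rw [div_mul_div_comm, ← rpow_add hs0, ← sq]
      ring_nf
    rw [h1, lm_scaleK ha, lm_ibp ht ht1]
    ring
  · rw [if_neg hab]
    have hab' : a - b ≠ 0 := sub_ne_zero.mpr hab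
    have h1 : ∫ s in Ioi (0:ℝ), s ^ (t/2) / (s + a) * (s ^ (t/2) / (s + b))
        = ∫ s in Ioi (0:ℝ),
            (a - b)⁻¹ * (a * (s ^ (t - 1) / (s + a)) - b * (s ^ (t - 1) / (s + b))) := by
      refine setIntegral_congr_fun measurableSet_Ioi (fun s hs => ?_)
      have hs0 : (0:ℝ) < s := hs
      have hsa : s + a ≠ 0 := by positivity
      have hsb : s + b ≠ 0 := by positivity
      have hPP : s ^ (t/2) * s ^ (t/2) = s * s ^ (t - 1) := by
        rw [← rpow_add hs0, show s * s ^ (t-1) = s ^ (1 + (t-1)) by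
          rw [rpow_add hs0, rpow_one]]
        ring_nf
      rw [div_mul_div_comm, hPP]
      field_simp
      ring
    rw [h1, integral_const_mul,
      integral_sub ((lm_intG ht ht1 ha).const_mul a) ((lm_intG ht ht1 hb).const_mul b),
      integral_const_mul, integral_const_mul, lm_scaleG ha, lm_scaleG hb]
    have hat : a * a ^ (t - 1) = a ^ t := by
      have h := Real.rpow_add ha 1 (t - 1)
      rw [rpow_one, show (1:ℝ) + (t - 1) = t by ring] at h
      exact h.symm
    have hbt : b * b ^ (t - 1) = b ^ t := by
      have h := Real.rpow_add hb 1 (t - 1)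
      rw [rpow_one, show (1:ℝ) + (t - 1) = t by ring] at h
      exact h.symm
    rw [← mul_assoc a, hat, ← mul_assoc b, hbt]
    field_simp

/-- Positivity of the base integral. -/
lemma lm_Ipos {t : ℝ} (ht : 0 < t) (ht1 : t < 1) :
    0 < ∫ s in Ioi (0:ℝ), s ^ (t - 1) / (s + 1) := by
  have hnn : 0 ≤ᵐ[volume.restrict (Ioi (0:ℝ))] fun s : ℝ => s ^ (t - 1) / (s + 1) := by
    filter_upwards [ae_restrict_mem measurableSet_Ioi] with s hs
    have hs0 : (0:ℝ) < s := hs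
    positivity
  refine (setIntegral_pos_iff_support_of_nonneg_ae hnn (lm_intG ht ht1 one_pos)).2 ?_
  have hsub : Ioi (0:ℝ) ⊆ Function.support (fun s : ℝ => s ^ (t - 1) / (s + 1)) ∩ Ioi 0 := by
    intro s hs
    have hs0 : (0:ℝ) < s := hs
    refine ⟨?_, hs⟩
    simp only [Function.mem_support]
    positivity
  calc (0:ENNReal) < volume (Ioi (0:ℝ)) := by rw [Real.volume_Ioi]; exact ENNReal.zero_lt_top
    _ ≤ _ := measure_mono hsub

theorem stmt_12 (t : ℝ) (ht : 0 < t) (ht1 : t < 1)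
    (n : ℕ) (lam : Fin n → ℝ) (hlam : ∀ i, 0 < lam i) :
    Matrix.PosSemidef (Matrix.of fun i j : Fin n =>
      if lam i = lam j then t * lam i ^ (t - 1)
      else (lam i ^ t - lam j ^ t) / (lam i - lam j)) := by
  set I₁ : ℝ := ∫ s in Ioi (0:ℝ), s ^ (t - 1) / (s + 1) with hI₁
  have hI : 0 < I₁ := lm_Ipos ht ht1
  set g : Fin n → ℝ → ℝ := fun i s => s ^ (t/2) / (s + lam i) with hg
  set M : Matrix (Fin n) (Fin n) ℝ := Matrix.of fun i j : Fin n =>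
      if lam i = lam j then t * lam i ^ (t - 1)
      else (lam i ^ t - lam j ^ t) / (lam i - lam j) with hM
  have key : ∀ i j, M i j * I₁ = ∫ s in Ioi (0:ℝ), g i s * g j s := fun i j =>
    lm_entry ht ht1 (hlam i) (hlam j)
  rw [Matrix.posSemidef_iff_dotProduct_mulVec]
  constructor
  · rw [Matrix.IsHermitian]
    ext i j
    simp only [Matrix.conjTranspose_apply, hM, Matrix.of_apply, star_trivial]
    by_cases h : lam i = lam j
    · rw [if_pos h, if_pos h.symm, h]
    · rw [if_neg h, if_neg (fun h' => h h'.symm), ← neg_sub (lam j ^ t), ← neg_sub (lam j),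
        neg_div_neg_eq]
  · intro x
    have hintij : ∀ i j : Fin n, IntegrableOn (fun s => x i * g i s * (x j * g j s)) (Ioi 0) := by
      intro i j
      have h0 : IntegrableOn (fun s : ℝ =>
          (x i * x j) * (s ^ (t/2) / (s + lam i) * (s ^ (t/2) / (s + lam j)))) (Ioi 0) :=
        (lm_intP ht ht1 (hlam i) (hlam j)).const_mul _
      refine h0.congr_fun (fun s _ => ?_) measurableSet_Ioi
      simp only [hg]
      ring
    have expand : dotProduct (star x) (M.mulVec x) = ∑ i, ∑ j, x i * x j * M i j := by
      simp only [dotProduct, Matrix.mulVec, Pi.star_apply, star_trivial, Finset.mul_sum]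
      exact Finset.sum_congr rfl fun i _ => Finset.sum_congr rfl fun j _ => by ring
    have hq : (∑ i, ∑ j, x i * x j * M i j) * I₁
        = ∫ s in Ioi (0:ℝ), (∑ i, x i * g i s) ^ 2 := by
      rw [Finset.sum_mul]
      have step1 : ∀ i : Fin n, (∑ j, x i * x j * M i j) * I₁
          = ∫ s in Ioi (0:ℝ), ∑ j, x i * g i s * (x j * g j s) := by
        intro i
        rw [integral_finset_sum _ (fun j _ => hintij i j), Finset.sum_mul]
        refine Finset.sum_congr rfl fun j _ => ?_
        have h2 : ∫ s in Ioi (0:ℝ), x i * g i s * (x j * g j s)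
            = (x i * x j) * ∫ s in Ioi (0:ℝ), g i s * g j s := by
          rw [← integral_const_mul]
          exact setIntegral_congr_fun measurableSet_Ioi fun s _ => by ring
        rw [h2, ← key i j]
        ring
      rw [Finset.sum_congr rfl fun i _ => step1 i,
        ← integral_finset_sum _ (fun i _ => integrable_finset_sum _ (fun j _ => hintij i j))]
      refine setIntegral_congr_fun measurableSet_Ioi fun s _ => ?_
      rw [sq, Finset.sum_mul_sum]
    have hnn : 0 ≤ ∫ s in Ioi (0:ℝ), (∑ i, x i * g i s) ^ 2 :=
      setIntegral_nonneg measurableSet_Ioi fun s _ => sq_nonneg _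
    have h3 : 0 ≤ (∑ i, ∑ j, x i * x j * M i j) * I₁ := by rw [hq]; exact hnn
    rw [expand]
    exact nonneg_of_mul_nonneg_left h3 hI
end

section
/- For 0 < t < 1 and strictly positive reals λ₁,…,λₙ, the matrix T with entries T_ij = t(1-t) · (λ_i^t − λ_j^t)/(λ_i − λ_j) · (λ_i^{1-t} − λ_j^{1-t})/(λ_i − λ_j) (with diagonal entries defined by continuity as t(1-t) t λ_i^{t-1} (1-t) λ_i^{-t}) is positive semidefinite. -/
open Real MeasureTheory Set

namespace Stmt13



lemma meas_aux (a c d : ℝ) :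
    AEStronglyMeasurable
      (fun p : ℝ × ℝ => p.1 ^ c * Real.exp (-(a * p.1)) * (p.2 ^ d * Real.exp (-(p.1 * p.2))))
      ((volume.restrict (Ioi (0:ℝ))).prod (volume.restrict (Ioi (0:ℝ)))) := by
  apply Measurable.aestronglyMeasurable
  fun_prop

lemma sect_int {r d : ℝ} (hr : 0 < r) (hd : -1 < d) :
    IntegrableOn (fun y : ℝ => y ^ d * Real.exp (-(r * y))) (Ioi 0) := by
  have := integrableOn_rpow_mul_exp_neg_mul_rpow hd zero_lt_one hr
  simpa [Real.rpow_one, neg_mul] using this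

lemma inner_y {r a c d : ℝ} (hr : 0 < r) (hd : -1 < d) :
    (∫ y in Ioi (0:ℝ), r ^ c * Real.exp (-(a * r)) * (y ^ d * Real.exp (-(r * y))))
      = r ^ c * Real.exp (-(a * r)) * ((1 / r) ^ (d + 1) * Real.Gamma (d + 1)) := by
  rw [MeasureTheory.integral_const_mul]
  congr 1
  have := Real.integral_rpow_mul_exp_neg_mul_Ioi (show (0:ℝ) < d + 1 by linarith) hr
  rw [add_sub_cancel_right] at this
  exact this

lemma inner_r {y a c d : ℝ} (hy : 0 < y) (ha : 0 < a) (hc : -1 < c) :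
    (∫ r in Ioi (0:ℝ), r ^ c * Real.exp (-(a * r)) * (y ^ d * Real.exp (-(r * y))))
      = Real.Gamma (c + 1) * (y ^ d * (1 / (y + a)) ^ (c + 1)) := by
  have hpt : ∀ r : ℝ, r ^ c * Real.exp (-(a * r)) * (y ^ d * Real.exp (-(r * y)))
      = y ^ d * (r ^ c * Real.exp (-((y + a) * r))) := by
    intro r
    rw [show (-((y + a) * r)) = -(a * r) + -(r * y) by ring, Real.exp_add]
    ring
  simp_rw [hpt]
  rw [MeasureTheory.integral_const_mul]
  have := Real.integral_rpow_mul_exp_neg_mul_Ioi (show (0:ℝ) < c + 1 by linarith)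
    (show (0:ℝ) < y + a by linarith)
  rw [add_sub_cancel_right] at this
  rw [this]
  ring

lemma norm_sect {r a c d : ℝ} (hr : 0 < r) (hd : -1 < d) :
    (∫ y in Ioi (0:ℝ), ‖r ^ c * Real.exp (-(a * r)) * (y ^ d * Real.exp (-(r * y)))‖)
      = Real.Gamma (d + 1) * (r ^ (c - d - 1) * Real.exp (-(a * r))) := by
  rw [setIntegral_congr_fun measurableSet_Ioi (g := fun y : ℝ =>
      r ^ c * Real.exp (-(a * r)) * (y ^ d * Real.exp (-(r * y))))]
  · rw [inner_y hr hd]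
    rw [one_div, Real.inv_rpow hr.le, ← Real.rpow_neg hr.le,
      show c - d - 1 = c + -(d+1) by ring, Real.rpow_add hr]
    ring
  · intro y hy
    have h1 : (0:ℝ) ≤ r ^ c * Real.exp (-(a * r)) * (y ^ d * Real.exp (-(r * y))) := by
      have := Real.rpow_nonneg hr.le c
      have := Real.rpow_nonneg (le_of_lt (mem_Ioi.mp hy)) d
      positivity
    exact Real.norm_of_nonneg h1

lemma prodInt {a c d : ℝ} (ha : 0 < a) (hc : -1 < c) (hd : -1 < d) (hdc : d < c) :
    Integrable
      (fun p : ℝ × ℝ => p.1 ^ c * Real.exp (-(a * p.1)) * (p.2 ^ d * Real.exp (-(p.1 * p.2))))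
      ((volume.restrict (Ioi (0:ℝ))).prod (volume.restrict (Ioi (0:ℝ)))) := by
  rw [MeasureTheory.integrable_prod_iff (meas_aux a c d)]
  constructor
  · filter_upwards [ae_restrict_mem measurableSet_Ioi] with r hr
    exact ((sect_int (mem_Ioi.mp hr) hd).const_mul _)
  · have base : IntegrableOn
        (fun r : ℝ => Real.Gamma (d+1) * (r ^ (c - d - 1) * Real.exp (-(a * r)))) (Ioi 0) :=
      ((sect_int ha (show (-1:ℝ) < c - d - 1 by linarith)).const_mul _)
    apply base.congr
    · filter_upwards [ae_restrict_mem measurableSet_Ioi] with r hr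
      exact (norm_sect (mem_Ioi.mp hr) hd).symm

lemma master_eq {a c d : ℝ} (ha : 0 < a) (hc : -1 < c) (hd : -1 < d) (hdc : d < c) :
    Real.Gamma (c + 1) * ∫ x in Ioi (0:ℝ), x ^ d * (1 / (x + a)) ^ (c + 1)
      = Real.Gamma (d + 1) * ((1 / a) ^ (c - d) * Real.Gamma (c - d)) := by
  have swap := MeasureTheory.integral_integral_swap (f := fun r y : ℝ =>
      r ^ c * Real.exp (-(a * r)) * (y ^ d * Real.exp (-(r * y))))
      (μ := volume.restrict (Ioi (0:ℝ))) (ν := volume.restrict (Ioi (0:ℝ)))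
      (prodInt ha hc hd hdc)
  have lhs : (∫ r in Ioi (0:ℝ), ∫ y in Ioi (0:ℝ),
      r ^ c * Real.exp (-(a * r)) * (y ^ d * Real.exp (-(r * y))))
      = Real.Gamma (d + 1) * ((1 / a) ^ (c - d) * Real.Gamma (c - d)) := by
    rw [setIntegral_congr_fun measurableSet_Ioi (g := fun r : ℝ =>
        Real.Gamma (d+1) * (r ^ (c - d - 1) * Real.exp (-(a * r))))]
    · rw [MeasureTheory.integral_const_mul]
      have := Real.integral_rpow_mul_exp_neg_mul_Ioi (show (0:ℝ) < c - d by linarith) ha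
      rw [show c - d - 1 = (c - d) - 1 by ring] at *
      rw [this]
    · intro r hr
      simp only []
      rw [inner_y (mem_Ioi.mp hr) hd]
      have hrp := mem_Ioi.mp hr
      rw [one_div, Real.inv_rpow hrp.le, ← Real.rpow_neg hrp.le,
        show c - d - 1 = c + -(d+1) by ring, Real.rpow_add hrp]
      ring
  have rhs : (∫ y in Ioi (0:ℝ), ∫ r in Ioi (0:ℝ),
      r ^ c * Real.exp (-(a * r)) * (y ^ d * Real.exp (-(r * y))))
      = Real.Gamma (c + 1) * ∫ x in Ioi (0:ℝ), x ^ d * (1 / (x + a)) ^ (c + 1) := by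
    rw [setIntegral_congr_fun measurableSet_Ioi (g := fun y : ℝ =>
        Real.Gamma (c+1) * (y ^ d * (1 / (y + a)) ^ (c + 1)))]
    · rw [MeasureTheory.integral_const_mul]
    · intro y hy
      exact inner_r (mem_Ioi.mp hy) ha hc
  rw [lhs] at swap
  rw [rhs] at swap
  exact swap.symm

lemma master_int {a c d : ℝ} (ha : 0 < a) (hc : -1 < c) (hd : -1 < d) (hdc : d < c) :
    IntegrableOn (fun x : ℝ => x ^ d * (1 / (x + a)) ^ (c + 1)) (Ioi 0) := by
  have h := (prodInt ha hc hd hdc).integral_prod_right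
  have h2 : Integrable (fun y : ℝ =>
      Real.Gamma (c+1) * (y ^ d * (1 / (y + a)) ^ (c + 1))) (volume.restrict (Ioi (0:ℝ))) := by
    apply h.congr
    filter_upwards [ae_restrict_mem measurableSet_Ioi] with y hy
    exact inner_r (mem_Ioi.mp hy) ha hc
  have h3 := h2.const_mul (Real.Gamma (c+1))⁻¹
  have hG : Real.Gamma (c+1) ≠ 0 := (Real.Gamma_pos_of_pos (by linarith)).ne'
  simpa [IntegrableOn, inv_mul_cancel_left₀ hG] using h3

lemma lemB_int {a s : ℝ} (ha : 0 < a) (hs : 0 < s) (hs1 : s < 1) :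
    IntegrableOn (fun x : ℝ => x ^ (s-1) * (1 / (x + a))) (Ioi 0) := by
  have := master_int (c := 0) (d := s-1) ha (by norm_num) (by linarith) (by linarith)
  simpa [Real.rpow_one] using this

lemma lemB {a s : ℝ} (ha : 0 < a) (hs : 0 < s) (hs1 : s < 1) :
    ∫ x in Ioi (0:ℝ), x ^ (s-1) * (1 / (x + a))
      = Real.Gamma s * Real.Gamma (1-s) * a ^ (s-1) := by
  have := master_eq (c := 0) (d := s-1) ha (by norm_num) (by linarith) (by linarith)
  rw [zero_add, Real.Gamma_one, one_mul] at this
  simp only [Real.rpow_one] at this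
  rw [this, show s - 1 + 1 = s by ring, show (0:ℝ) - (s-1) = 1 - s by ring]
  rw [one_div, Real.inv_rpow ha.le, ← Real.rpow_neg ha.le, show -(1-s) = s - 1 by ring]
  ring

lemma I_val_eq {a s : ℝ} (ha : 0 < a) (hs : 0 < s) (hs1 : s < 1) :
    ∫ x in Ioi (0:ℝ), x ^ s * (1 / ((x + a) * (x + a)))
      = Real.Gamma s * Real.Gamma (1-s) * (s * a ^ (s-1)) := by
  rw [setIntegral_congr_fun measurableSet_Ioi
      (g := fun x : ℝ => x ^ s * (1 / (x + a)) ^ ((1:ℝ) + 1))]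
  · have := master_eq (c := 1) (d := s) ha (by norm_num) (by linarith) (by linarith)
    have hG2 : Real.Gamma (1 + 1) = 1 := by
      rw [Real.Gamma_add_one one_ne_zero, Real.Gamma_one, mul_one]
    rw [hG2, one_mul] at this
    rw [this, Real.Gamma_add_one hs.ne']
    rw [one_div, Real.inv_rpow ha.le, ← Real.rpow_neg ha.le,
      show -(1 - s) = s - 1 by ring]
    ring
  · intro x hx
    simp only []
    rw [show ((1:ℝ) + 1) = ((2:ℕ):ℝ) by norm_num, Real.rpow_natCast]
    rw [pow_two]
    rw [one_div, one_div, mul_inv]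

lemma I_val_ne {a b s : ℝ} (ha : 0 < a) (hb : 0 < b) (hs : 0 < s) (hs1 : s < 1)
    (hab : a ≠ b) :
    ∫ x in Ioi (0:ℝ), x ^ s * (1 / ((x + a) * (x + b)))
      = Real.Gamma s * Real.Gamma (1-s) * ((a ^ s - b ^ s) / (a - b)) := by
  have hba : b - a ≠ 0 := sub_ne_zero.mpr (Ne.symm hab)
  rw [setIntegral_congr_fun measurableSet_Ioi
      (g := fun x : ℝ => (b-a)⁻¹ * (b * (x ^ (s-1) * (1 / (x + b))))
        - (b-a)⁻¹ * (a * (x ^ (s-1) * (1 / (x + a)))))]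
  · rw [MeasureTheory.integral_sub
      (((lemB_int hb hs hs1).const_mul b).const_mul _)
      (((lemB_int ha hs hs1).const_mul a).const_mul _)]
    rw [MeasureTheory.integral_const_mul, MeasureTheory.integral_const_mul,
      MeasureTheory.integral_const_mul, MeasureTheory.integral_const_mul,
      lemB hb hs hs1, lemB ha hs hs1]
    have h1 : b * (Real.Gamma s * Real.Gamma (1-s) * b ^ (s-1))
        = Real.Gamma s * Real.Gamma (1-s) * b ^ s := by
      rw [show b * (Real.Gamma s * Real.Gamma (1-s) * b ^ (s-1))
        = Real.Gamma s * Real.Gamma (1-s) * (b ^ (s-1) * b) by ring,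
        ← Real.rpow_add_one hb.ne', sub_add_cancel]
    have h2 : a * (Real.Gamma s * Real.Gamma (1-s) * a ^ (s-1))
        = Real.Gamma s * Real.Gamma (1-s) * a ^ s := by
      rw [show a * (Real.Gamma s * Real.Gamma (1-s) * a ^ (s-1))
        = Real.Gamma s * Real.Gamma (1-s) * (a ^ (s-1) * a) by ring,
        ← Real.rpow_add_one ha.ne', sub_add_cancel]
    rw [h1, h2]
    have expand : ∀ u v : ℝ, (b-a)⁻¹ * u - (b-a)⁻¹ * v = (u - v)/(b-a) := by
      intro u v; field_simp
    rw [expand, ← mul_div_assoc, div_eq_div_iff hba (sub_ne_zero.mpr hab)]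
    ring
  · intro x hx
    have hxp : (0:ℝ) < x := mem_Ioi.mp hx
    have hxa : x + a ≠ 0 := by positivity
    have hxb : x + b ≠ 0 := by positivity
    have hx1 : x ^ (s-1) * x = x ^ s := by
      rw [← Real.rpow_add_one hxp.ne']; norm_num
    have key : (b-a)⁻¹ * (b * (x ^ (s-1) * (1/(x+b)))) - (b-a)⁻¹ * (a * (x ^ (s-1) * (1/(x+a))))
        = x ^ (s-1) * x * (1/((x+a)*(x+b))) := by
      field_simp
      ring
    simp only []
    rw [← hx1]
    exact key.symm
lemma intOn2 {a b d : ℝ} (ha : 0 < a) (hb : 0 < b) (hd : -1 < d) (hd1 : d < 1) :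
    IntegrableOn (fun x : ℝ => x ^ d * (1 / ((x + a) * (x + b)))) (Ioi 0) := by
  have hmp : 0 < min a b := lt_min ha hb
  have hg : IntegrableOn (fun x : ℝ => x ^ d * (1 / (x + min a b)) ^ ((1:ℝ) + 1)) (Ioi 0) :=
    master_int hmp (by norm_num) hd (by linarith)
  apply hg.mono'
  · apply Measurable.aestronglyMeasurable; fun_prop
  · filter_upwards [ae_restrict_mem measurableSet_Ioi] with x hx
    have hxp : (0:ℝ) < x := hx
    have hxa : 0 < x + a := by linarith
    have hxb : 0 < x + b := by linarith
    have hxm : 0 < x + min a b := by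
      have := min_le_left a b; linarith
    have hmm : (x + min a b) * (x + min a b) ≤ (x + a) * (x + b) := by
      have h1 : x + min a b ≤ x + a := by have := min_le_left a b; linarith
      have h2 : x + min a b ≤ x + b := by have := min_le_right a b; linarith
      exact mul_le_mul h1 h2 hxm.le hxa.le
    have hnn : (0:ℝ) ≤ x ^ d * (1 / ((x + a) * (x + b))) := by positivity
    rw [Real.norm_of_nonneg hnn]
    rw [show ((1:ℝ) + 1) = ((2:ℕ):ℝ) by norm_num, Real.rpow_natCast, pow_two]
    apply mul_le_mul_of_nonneg_left _ (Real.rpow_nonneg hxp.le d)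
    rw [div_mul_div_comm, one_mul]
    exact one_div_le_one_div_of_le (by positivity) hmm

noncomputable def Kk (s a b : ℝ) : ℝ := ∫ x in Ioi (0:ℝ), x ^ s * (1 / ((x + a) * (x + b)))

lemma Kk_symm (s a b : ℝ) : Kk s b a = Kk s a b := by
  unfold Kk
  congr 1
  funext x
  rw [mul_comm (x + b) (x + a)]

lemma Kk_val {a b s : ℝ} (ha : 0 < a) (hb : 0 < b) (hs : 0 < s) (hs1 : s < 1) :
    Kk s a b = Real.Gamma s * Real.Gamma (1-s) *
      (if a = b then s * a ^ (s-1) else (a ^ s - b ^ s) / (a - b)) := by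
  unfold Kk
  split_ifs with h
  · subst h
    exact I_val_eq ha hs hs1
  · exact I_val_ne ha hb hs hs1 h

lemma gram_nonneg {n : ℕ} {a : Fin n → ℝ} (ha : ∀ i, 0 < a i) {s : ℝ}
    (hs : 0 < s) (hs1 : s < 1) (d : Fin n → ℝ) :
    0 ≤ ∑ i, ∑ j, d i * d j * Kk s (a i) (a j) := by
  have hInt : ∀ i j : Fin n, IntegrableOn
      (fun x : ℝ => d i * d j * (x ^ s * (1 / ((x + a i) * (x + a j))))) (Ioi 0) :=
    fun i j => (intOn2 (ha i) (ha j) (by linarith) hs1).const_mul _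
  have step : (∑ i, ∑ j, d i * d j * Kk s (a i) (a j))
      = ∫ x in Ioi (0:ℝ), ∑ i, ∑ j, d i * d j * (x ^ s * (1 / ((x + a i) * (x + a j)))) := by
    rw [MeasureTheory.integral_finset_sum _ (fun i _ =>
      MeasureTheory.integrable_finset_sum _ (fun j _ => hInt i j))]
    refine Finset.sum_congr rfl fun i _ => ?_
    rw [MeasureTheory.integral_finset_sum _ (fun j _ => hInt i j)]
    exact Finset.sum_congr rfl fun j _ => (MeasureTheory.integral_const_mul _ _).symm
  rw [step]
  apply MeasureTheory.setIntegral_nonneg measurableSet_Ioi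
  intro x hx
  have hxp : (0:ℝ) < x := hx
  have key : (∑ i, ∑ j, d i * d j * (x ^ s * (1 / ((x + a i) * (x + a j)))))
      = x ^ s * (∑ i, d i * (1 / (x + a i))) ^ 2 := by
    rw [pow_two, Finset.sum_mul_sum, Finset.mul_sum]
    refine Finset.sum_congr rfl fun i _ => ?_
    rw [Finset.mul_sum]
    refine Finset.sum_congr rfl fun j _ => ?_
    rw [one_div, one_div, one_div, mul_inv]
    ring
  rw [key]
  positivity

lemma core {n : ℕ} {lam : Fin n → ℝ} (hlam : ∀ i, 0 < lam i) {t : ℝ}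
    (ht : 0 < t) (ht1 : t < 1) (x : Fin n → ℝ) :
    0 ≤ ∑ i, ∑ j, x i * x j * (Kk t (lam i) (lam j) * Kk (1-t) (lam i) (lam j)) := by
  have hterm : ∀ i j : Fin n, x i * x j * (Kk t (lam i) (lam j) * Kk (1-t) (lam i) (lam j))
      = ∫ y in Ioi (0:ℝ), (x i * x j * Kk (1-t) (lam i) (lam j))
          * (y ^ t * (1 / ((y + lam i) * (y + lam j)))) := by
    intro i j
    rw [MeasureTheory.integral_const_mul]
    unfold Kk
    ring
  have hInt : ∀ i j : Fin n, IntegrableOn (fun y : ℝ =>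
      (x i * x j * Kk (1-t) (lam i) (lam j)) * (y ^ t * (1 / ((y + lam i) * (y + lam j)))))
      (Ioi 0) :=
    fun i j => (intOn2 (hlam i) (hlam j) (by linarith) ht1).const_mul _
  have step : (∑ i, ∑ j, x i * x j * (Kk t (lam i) (lam j) * Kk (1-t) (lam i) (lam j)))
      = ∫ y in Ioi (0:ℝ), ∑ i, ∑ j, (x i * x j * Kk (1-t) (lam i) (lam j))
          * (y ^ t * (1 / ((y + lam i) * (y + lam j)))) := by
    rw [MeasureTheory.integral_finset_sum _ (fun i _ =>
      MeasureTheory.integrable_finset_sum _ (fun j _ => hInt i j))]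
    refine Finset.sum_congr rfl fun i _ => ?_
    rw [MeasureTheory.integral_finset_sum _ (fun j _ => hInt i j)]
    exact Finset.sum_congr rfl fun j _ => hterm i j
  rw [step]
  apply MeasureTheory.setIntegral_nonneg measurableSet_Ioi
  intro y hy
  have hyp : (0:ℝ) < y := hy
  have hpt : (∑ i, ∑ j, (x i * x j * Kk (1-t) (lam i) (lam j))
        * (y ^ t * (1 / ((y + lam i) * (y + lam j)))))
      = y ^ t * ∑ i, ∑ j, (x i * (1 / (y + lam i))) * (x j * (1 / (y + lam j)))
          * Kk (1-t) (lam i) (lam j) := by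
    rw [Finset.mul_sum]
    refine Finset.sum_congr rfl fun i _ => ?_
    rw [Finset.mul_sum]
    refine Finset.sum_congr rfl fun j _ => ?_
    rw [one_div, one_div, one_div, mul_inv]
    ring
  rw [hpt]
  exact mul_nonneg (Real.rpow_nonneg hyp.le t)
    (gram_nonneg hlam (by linarith) (by linarith) (fun i => x i * (1 / (y + lam i))))

end Stmt13

open Stmt13 in
theorem stmt_13 (t : ℝ) (ht : 0 < t) (ht1 : t < 1)
    (n : ℕ) (lam : Fin n → ℝ) (hlam : ∀ i, 0 < lam i) :
    Matrix.PosSemidef (Matrix.of fun i j : Fin n =>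
      if lam i = lam j then
        t * (1 - t) * (t * lam i ^ (t - 1)) * ((1 - t) * lam i ^ (-t))
      else
        t * (1 - t) * ((lam i ^ t - lam j ^ t) / (lam i - lam j)) *
          ((lam i ^ (1 - t) - lam j ^ (1 - t)) / (lam i - lam j))) := by
  have ht1' : 0 < 1 - t := by linarith
  have hg1 : Real.Gamma t ≠ 0 := (Real.Gamma_pos_of_pos ht).ne'
  have hg2 : Real.Gamma (1 - t) ≠ 0 := (Real.Gamma_pos_of_pos ht1').ne'
  have hC : 0 ≤ t * (1 - t) / (Real.Gamma t * Real.Gamma (1 - t)) ^ 2 := by positivity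
  have entry_eq : ∀ i j : Fin n,
      (if lam i = lam j then
        t * (1 - t) * (t * lam i ^ (t - 1)) * ((1 - t) * lam i ^ (-t))
      else
        t * (1 - t) * ((lam i ^ t - lam j ^ t) / (lam i - lam j)) *
          ((lam i ^ (1 - t) - lam j ^ (1 - t)) / (lam i - lam j)))
      = t * (1 - t) / (Real.Gamma t * Real.Gamma (1 - t)) ^ 2
        * (Kk t (lam i) (lam j) * Kk (1 - t) (lam i) (lam j)) := by
    intro i j
    have gen : ∀ P Q : ℝ, t * (1 - t) * P * Q
        = t * (1 - t) / (Real.Gamma t * Real.Gamma (1 - t)) ^ 2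
          * (Real.Gamma t * Real.Gamma (1 - t) * P * (Real.Gamma (1 - t) * Real.Gamma t * Q)) := by
      intro P Q
      field_simp
    rw [Kk_val (hlam i) (hlam j) ht ht1,
      Kk_val (hlam i) (hlam j) ht1' (by linarith), sub_sub_cancel]
    by_cases h : lam i = lam j
    · rw [if_pos h, if_pos h, if_pos h, show (1 - t) - 1 = -t by ring]
      exact gen _ _
    · rw [if_neg h, if_neg h, if_neg h]
      exact gen _ _
  constructor
  · show _ = _
    ext i j
    simp only [Matrix.conjTranspose_apply, Matrix.of_apply, star_trivial]
    rw [entry_eq j i, entry_eq i j, Kk_symm t (lam i) (lam j), Kk_symm (1 - t) (lam i) (lam j)]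
  · intro x
    simp only [Finsupp.sum_fintype, zero_mul, mul_zero, Finset.sum_const_zero, implies_true,
      Matrix.of_apply, star_trivial]
    have trans : (∑ i, x i * ∑ j,
        (if lam i = lam j then
          t * (1 - t) * (t * lam i ^ (t - 1)) * ((1 - t) * lam i ^ (-t))
        else
          t * (1 - t) * ((lam i ^ t - lam j ^ t) / (lam i - lam j)) *
            ((lam i ^ (1 - t) - lam j ^ (1 - t)) / (lam i - lam j))) * x j)
        = t * (1 - t) / (Real.Gamma t * Real.Gamma (1 - t)) ^ 2 * ∑ i, ∑ j, x i * x j *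
            (Kk t (lam i) (lam j) * Kk (1 - t) (lam i) (lam j)) := by
      rw [Finset.mul_sum]
      refine Finset.sum_congr rfl fun i _ => ?_
      rw [Finset.mul_sum, Finset.mul_sum]
      refine Finset.sum_congr rfl fun j _ => ?_
      rw [entry_eq i j]
      ring
    convert mul_nonneg hC (core hlam ht ht1 x) using 1
    rw [← trans]
    refine Finset.sum_congr rfl fun i _ => ?_
    rw [Finset.mul_sum]
    refine Finset.sum_congr rfl fun j _ => ?_
    ring
end

section
/- For fixed x > 0, the function t ↦ f_t(x) = ((t-1)/t) · (x^t − 1)/(x^{t-1} − 1) is monotone increasing in t on [-1, 2] (interpreting removable singularities by continuity). -/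
/-- The power difference mean function `t ↦ ((t-1)/t)·(x^t − 1)/(x^{t-1} − 1)`,
with removable singularities (at `x = 1`, `t = 0` and `t = 1`) filled in by continuity. -/
noncomputable def powerDiff (x t : ℝ) : ℝ :=
  if x = 1 then 1
  else if t = 0 then x * Real.log x / (x - 1)
  else if t = 1 then (x - 1) / Real.log x
  else ((t - 1) / t) * (x ^ t - 1) / (x ^ (t - 1) - 1)

/-- Exponential average: `E a = ∫ s in 0..1, exp (a*s)`. -/
noncomputable def expAvg (a : ℝ) : ℝ := ∫ s in (0:ℝ)..1, Real.exp (a * s)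

lemma expAvg_intble (a c d : ℝ) :
    IntervalIntegrable (fun s => Real.exp (a * s)) MeasureTheory.volume c d :=
  (Real.continuous_exp.comp (continuous_const.mul continuous_id)).intervalIntegrable c d

lemma expAvg_pos (a : ℝ) : 0 < expAvg a :=
  intervalIntegral.intervalIntegral_pos_of_pos (expAvg_intble a 0 1)
    (fun s => Real.exp_pos _) one_pos

lemma expAvg_zero : expAvg 0 = 1 := by
  simp [expAvg]

lemma expAvg_ne_zero (a : ℝ) : expAvg a ≠ 0 := (expAvg_pos a).ne'

lemma expAvg_eq (a : ℝ) (ha : a ≠ 0) : expAvg a = (Real.exp a - 1) / a := by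
  have h : (fun s : ℝ => Real.exp (a * s)) = fun s : ℝ => Real.exp (s * a) := by
    ext s; rw [mul_comm]
  rw [expAvg, h, intervalIntegral.integral_comp_mul_right (fun x => Real.exp x) ha]
  simp [smul_eq_mul, div_eq_inv_mul]

/-- Four point inequality for `exp`. -/
lemma exp_four (p q r s : ℝ) (hsum : p + q = r + s) (habs : |r - s| ≤ |p - q|) :
    Real.exp r + Real.exp s ≤ Real.exp p + Real.exp q := by
  have key : ∀ u v : ℝ, Real.exp u + Real.exp v
      = 2 * Real.exp ((u + v) / 2) * Real.cosh ((u - v) / 2) := by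
    intro u v
    have e1 : Real.exp u = Real.exp ((u + v) / 2) * Real.exp ((u - v) / 2) := by
      rw [← Real.exp_add]; congr 1; ring
    have e2 : Real.exp v = Real.exp ((u + v) / 2) * Real.exp (-((u - v) / 2)) := by
      rw [← Real.exp_add]; congr 1; ring
    rw [Real.cosh_eq, e1, e2]; ring
  rw [key p q, key r s, hsum]
  have h2 : Real.cosh ((r - s) / 2) ≤ Real.cosh ((p - q) / 2) := by
    rw [Real.cosh_le_cosh, abs_div, abs_div]
    exact div_le_div_of_nonneg_right habs (by norm_num)
  have h3 : 0 < 2 * Real.exp ((r + s) / 2) := by positivity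
  exact mul_le_mul_of_nonneg_left h2 h3.le

/-- Product inequality: `expAvg a * expAvg b` depends only on `a+b` and grows with `|a-b|`. -/
lemma expAvg_prod_le (a b a' b' : ℝ) (hsum : a + b = a' + b') (habs : |a - b| ≤ |a' - b'|) :
    expAvg a * expAvg b ≤ expAvg a' * expAvg b' := by
  have expand : ∀ u v : ℝ,
      expAvg u * expAvg v + expAvg v * expAvg u
        = ∫ s in (0:ℝ)..1, (Real.exp (u * s) * expAvg v + Real.exp (v * s) * expAvg u) := by
    intro u v
    rw [intervalIntegral.integral_add
      ((expAvg_intble u 0 1).mul_const _) ((expAvg_intble v 0 1).mul_const _),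
      intervalIntegral.integral_mul_const, intervalIntegral.integral_mul_const]
    rfl
  have h2 : expAvg a * expAvg b + expAvg b * expAvg a
      ≤ expAvg a' * expAvg b' + expAvg b' * expAvg a' := by
    rw [expand a b, expand a' b']
    apply intervalIntegral.integral_mono_on one_pos.le
    · exact ((expAvg_intble a 0 1).mul_const _).add ((expAvg_intble b 0 1).mul_const _)
    · exact ((expAvg_intble a' 0 1).mul_const _).add ((expAvg_intble b' 0 1).mul_const _)
    intro s hs
    -- expand the inner expAvg's as integrals and compare pointwise in u
    have expand2 : ∀ w z : ℝ, Real.exp (w * s) * expAvg z + Real.exp (z * s) * expAvg w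
        = ∫ u in (0:ℝ)..1, (Real.exp (w * s + z * u) + Real.exp (z * s + w * u)) := by
      intro w z
      simp only [Real.exp_add]
      rw [intervalIntegral.integral_add, intervalIntegral.integral_const_mul,
        intervalIntegral.integral_const_mul]
      · rfl
      · exact (Continuous.intervalIntegrable (by fun_prop) 0 1)
      · exact (Continuous.intervalIntegrable (by fun_prop) 0 1)
    rw [expand2 a b, expand2 a' b']
    apply intervalIntegral.integral_mono_on one_pos.le
    · exact ((Real.continuous_exp.comp (by fun_prop)).add
        (Real.continuous_exp.comp (by fun_prop))).intervalIntegrable 0 1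
    · exact ((Real.continuous_exp.comp (by fun_prop)).add
        (Real.continuous_exp.comp (by fun_prop))).intervalIntegrable 0 1
    intro u hu
    apply exp_four
    · linear_combination (s + u) * hsum.symm
    · have : a * s + b * u - (b * s + a * u) = (a - b) * (s - u) := by ring
      rw [this]
      have : a' * s + b' * u - (b' * s + a' * u) = (a' - b') * (s - u) := by ring
      rw [this, abs_mul, abs_mul]
      exact mul_le_mul_of_nonneg_right habs (abs_nonneg _)
  linarith

lemma powerDiff_eq (x t : ℝ) (hx : 0 < x) :
    powerDiff x t = expAvg (t * Real.log x) / expAvg ((t - 1) * Real.log x) := by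
  unfold powerDiff
  by_cases h1 : x = 1
  · simp [h1, expAvg_zero]
  have hc : Real.log x ≠ 0 := Real.log_ne_zero_of_pos_of_ne_one hx h1
  have hexp : ∀ t : ℝ, Real.exp (t * Real.log x) = x ^ t := by
    intro t; rw [Real.rpow_def_of_pos hx, mul_comm]
  rw [if_neg h1]
  by_cases h0 : t = 0
  · subst h0
    rw [if_pos rfl, zero_mul, expAvg_zero, expAvg_eq _ (by simpa using hc)]
    have he : Real.exp ((0 - 1) * Real.log x) = x⁻¹ := by
      rw [show ((0:ℝ) - 1) * Real.log x = -Real.log x by ring, Real.exp_neg, Real.exp_log hx]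
    rw [he]
    have hx1 : x - 1 ≠ 0 := sub_ne_zero.mpr h1
    have h2 : x⁻¹ - 1 ≠ 0 := sub_ne_zero.mpr (fun h => h1 (by rwa [inv_eq_one] at h))
    have h3 : (1 : ℝ) - x ≠ 0 := fun h => h1 (by linarith)
    field_simp
    ring
  rw [if_neg h0]
  by_cases ht1 : t = 1
  · subst ht1
    rw [if_pos rfl]
    simp only [sub_self, zero_mul, expAvg_zero, div_one]
    rw [expAvg_eq _ (by simpa using hc), hexp]
    simp
  rw [if_neg ht1]
  have ht0 : t * Real.log x ≠ 0 := mul_ne_zero h0 hc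
  have ht1' : (t - 1) * Real.log x ≠ 0 := mul_ne_zero (sub_ne_zero.mpr ht1) hc
  rw [expAvg_eq _ ht0, expAvg_eq _ ht1', hexp, hexp]
  have hden : x ^ (t - 1 : ℝ) - 1 ≠ 0 := by
    rw [sub_ne_zero, ← hexp]
    simp only [ne_eq, Real.exp_eq_one_iff]
    exact ht1'
  have ht1n : t - 1 ≠ 0 := sub_ne_zero.mpr ht1
  set X := x ^ t with hX
  set Y := x ^ (t - 1 : ℝ) with hY
  field_simp

theorem stmt_14 (x : ℝ) (hx : 0 < x) :
    MonotoneOn (fun t => powerDiff x t) (Set.Icc (-1 : ℝ) 2) := by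
  intro t1 _ t2 _ h12
  simp only
  rw [powerDiff_eq x t1 hx, powerDiff_eq x t2 hx]
  rw [div_le_div_iff₀ (expAvg_pos _) (expAvg_pos _)]
  apply expAvg_prod_le
  · ring
  · have h1 : t1 * Real.log x - (t2 - 1) * Real.log x = (t1 - t2 + 1) * Real.log x := by ring
    have h2 : t2 * Real.log x - (t1 - 1) * Real.log x = (t2 - t1 + 1) * Real.log x := by ring
    rw [h1, h2, abs_mul, abs_mul]
    apply mul_le_mul_of_nonneg_right _ (abs_nonneg _)
    rw [abs_le]
    constructor
    · rw [abs_of_nonneg (by linarith)]; linarith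
    · rw [abs_of_nonneg (by linarith)]; linarith
end

section
/- For t ≥ 1/2 (t ≠ 1) and strictly positive reals λ₁,…,λₙ, the matrix T with entries T_ij = (t/(t-1)) · (λ_i^{t-1} − λ_j^{t-1})/(λ_i^t − λ_j^t) (diagonal entries by continuity) is positive semidefinite. -/
open MeasureTheory Set Real Filter Topology Matrix

namespace Stmt16


lemma cont_rpow (p : ℝ) (hp : 0 < p) : Continuous fun l : ℝ => l ^ p := by
  rw [continuous_iff_continuousAt]
  intro x
  exact Real.continuousAt_rpow_const x p (Or.inr hp.le)

lemma integrable_kernel {p : ℝ} (hp0 : 0 < p) (hp1 : p < 1) {x y : ℝ} (hx : 0 < x) (hy : 0 < y) :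
    IntegrableOn (fun l : ℝ => l ^ p / ((x + l) * (y + l))) (Ioi 0) := by
  have hcont : ContinuousOn (fun l : ℝ => l ^ p / ((x + l) * (y + l))) (Ici 0) := by
    apply ((cont_rpow p hp0).continuousOn).div
    · fun_prop
    · intro l hl
      have : (0:ℝ) < x + l := by simp only [mem_Ici] at hl; linarith
      have h2 : (0:ℝ) < y + l := by simp only [mem_Ici] at hl; linarith
      positivity
  rw [← Ioc_union_Ioi_eq_Ioi (zero_le_one (α := ℝ))]
  apply IntegrableOn.union
  · exact ((hcont.mono (Icc_subset_Ici_self : Icc (0:ℝ) 1 ⊆ Ici 0)).integrableOn_compact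
      isCompact_Icc).mono_set Ioc_subset_Icc_self
  · apply Integrable.mono (integrableOn_Ioi_rpow_of_lt (by linarith : p - 2 < -1) one_pos)
    · exact (hcont.mono (fun l hl => mem_Ici.2 (le_of_lt (lt_of_lt_of_le one_pos (le_of_lt (mem_Ioi.1 hl)))) : Ioi (1:ℝ) ⊆ Ici 0)).aestronglyMeasurable measurableSet_Ioi
    · filter_upwards [ae_restrict_mem measurableSet_Ioi] with l hl
      have hl1 : (1:ℝ) ≤ l := le_of_lt hl
      have hl0 : (0:ℝ) < l := lt_of_lt_of_le one_pos hl1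
      have h1 : (0:ℝ) < x + l := by linarith
      have h2 : (0:ℝ) < y + l := by linarith
      rw [Real.norm_eq_abs, Real.norm_eq_abs, abs_of_nonneg (by positivity),
        abs_of_nonneg (Real.rpow_nonneg hl0.le _)]
      have key : l ^ p / ((x + l) * (y + l)) ≤ l ^ p / (l * l) := by
        apply div_le_div_of_nonneg_left (Real.rpow_nonneg hl0.le _) (by positivity)
        apply mul_le_mul (by linarith) (by linarith) hl0.le h1.le
      refine key.trans (le_of_eq ?_)
      have h22 : l * l = l ^ (2:ℝ) := by
        rw [show (2:ℝ) = 1 + 1 by norm_num, Real.rpow_add hl0, Real.rpow_one]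
      rw [h22, ← Real.rpow_sub hl0]

lemma integrable_half {p : ℝ} (hp0 : 0 < p) (hp1 : p < 1) {x : ℝ} (hx : 0 < x) :
    IntegrableOn (fun l : ℝ => l ^ (p - 1) * (x / (x + l))) (Ioi 0) := by
  have hcont : ContinuousOn (fun l : ℝ => l ^ (p - 1) * (x / (x + l))) (Ioi 0) := by
    apply ContinuousOn.mul
    · intro l hl
      exact (Real.continuousAt_rpow_const l (p-1) (Or.inl (ne_of_gt hl))).continuousWithinAt
    · apply ContinuousOn.div continuousOn_const (by fun_prop)
      intro l hl
      have : (0:ℝ) < l := hl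
      positivity
  rw [← Ioc_union_Ioi_eq_Ioi (zero_le_one (α := ℝ))]
  apply IntegrableOn.union
  · apply Integrable.mono
      (intervalIntegral.intervalIntegrable_rpow' (a := 0) (b := 1)
        (by linarith : (-1:ℝ) < p - 1)).1
    · exact (hcont.mono (fun l hl => hl.1 : Ioc (0:ℝ) 1 ⊆ Ioi 0)).aestronglyMeasurable measurableSet_Ioc
    · filter_upwards [ae_restrict_mem measurableSet_Ioc] with l hl
      have hl0 : (0:ℝ) < l := hl.1
      have h1 : (0:ℝ) < x + l := by linarith
      rw [Real.norm_eq_abs, Real.norm_eq_abs, abs_of_nonneg (by positivity),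
        abs_of_nonneg (Real.rpow_nonneg hl0.le _)]
      have : x / (x + l) ≤ 1 := by
        rw [div_le_one h1]; linarith
      calc l ^ (p-1) * (x / (x+l)) ≤ l ^ (p-1) * 1 :=
            mul_le_mul_of_nonneg_left this (Real.rpow_nonneg hl0.le _)
        _ = l ^ (p-1) := mul_one _
  · apply Integrable.mono ((integrableOn_Ioi_rpow_of_lt (by linarith : p - 2 < -1) one_pos).const_mul x)
    · exact (hcont.mono (fun l hl => mem_Ioi.2 (lt_of_lt_of_le one_pos (le_of_lt (mem_Ioi.1 hl))) : Ioi (1:ℝ) ⊆ Ioi 0)).aestronglyMeasurable measurableSet_Ioi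
    · filter_upwards [ae_restrict_mem measurableSet_Ioi] with l hl
      have hl1 : (1:ℝ) ≤ l := le_of_lt hl
      have hl0 : (0:ℝ) < l := lt_of_lt_of_le one_pos hl1
      have h1 : (0:ℝ) < x + l := by linarith
      rw [Real.norm_eq_abs, Real.norm_eq_abs, abs_of_nonneg (by positivity),
        abs_of_nonneg (by positivity)]
      have h2 : x / (x + l) ≤ x / l := by
        apply div_le_div_of_nonneg_left hx.le hl0; linarith
      calc l ^ (p-1) * (x / (x+l)) ≤ l ^ (p-1) * (x / l) :=
            mul_le_mul_of_nonneg_left h2 (Real.rpow_nonneg hl0.le _)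
        _ = x * (l ^ (p-1) / l) := by ring
        _ = x * l ^ (p-2) := by
            rw [show p - 2 = (p-1) - 1 by ring, Real.rpow_sub_one hl0.ne', Real.rpow_sub_one hl0.ne', Real.rpow_sub_one hl0.ne']




noncomputable def Cp (p : ℝ) : ℝ := ∫ s in Ioi (0:ℝ), s ^ (p - 1) * ((1:ℝ) / (1 + s))

lemma Cp_pos {p : ℝ} (hp0 : 0 < p) (hp1 : p < 1) : 0 < Cp p := by
  have hint : IntegrableOn (fun l : ℝ => l ^ (p - 1) * ((1:ℝ) / (1 + l))) (Ioi 0) :=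
    integrable_half hp0 hp1 one_pos
  rw [Cp, setIntegral_pos_iff_support_of_nonneg_ae ?_ hint]
  · apply lt_of_lt_of_le ?_ (measure_mono (?_ :
      Ioi (0:ℝ) ⊆ Function.support (fun l : ℝ => l ^ (p - 1) * ((1:ℝ) / (1 + l))) ∩ Ioi 0))
    · rw [Real.volume_Ioi]; exact ENNReal.zero_lt_top
    · intro l hl
      have hl0 : (0:ℝ) < l := hl
      refine ⟨Function.mem_support.2 ?_, hl⟩
      have : 0 < l ^ (p-1) * ((1:ℝ)/(1+l)) := by positivity
      exact this.ne'
  · filter_upwards [ae_restrict_mem measurableSet_Ioi] with l hl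
    have hl0 : (0:ℝ) < l := hl
    positivity

lemma half_eval {p : ℝ} (hp0 : 0 < p) (hp1 : p < 1) {x : ℝ} (hx : 0 < x) :
    ∫ l in Ioi (0:ℝ), l ^ (p - 1) * (x / (x + l)) = Cp p * x ^ p := by
  have hx' : x ≠ 0 := hx.ne'
  have key : ∫ s in Ioi (0:ℝ), (x*s) ^ (p-1) * (x/(x+x*s))
      = x⁻¹ * ∫ l in Ioi (0:ℝ), l ^ (p-1) * (x/(x+l)) := by
    have h := integral_comp_mul_left_Ioi (fun l => l ^ (p-1) * (x/(x+l))) 0 hx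
    rw [mul_zero] at h
    simpa [smul_eq_mul] using h
  have key2 : ∫ s in Ioi (0:ℝ), (x*s) ^ (p-1) * (x/(x+x*s)) = x ^ (p-1) * Cp p := by
    rw [Cp, ← integral_const_mul]
    apply setIntegral_congr_fun measurableSet_Ioi
    intro s hs
    have hs0 : (0:ℝ) < s := hs
    have h1s : (0:ℝ) < 1 + s := by linarith
    show (x*s) ^ (p-1) * (x/(x+x*s)) = x ^ (p-1) * (s ^ (p-1) * (1/(1+s)))
    rw [Real.mul_rpow hx.le hs0.le, show x + x * s = x * (1 + s) by ring]
    field_simp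
  have hcomb : x⁻¹ * ∫ l in Ioi (0:ℝ), l ^ (p-1) * (x/(x+l)) = x ^ (p-1) * Cp p := by
    rw [← key, key2]
  have : ∫ l in Ioi (0:ℝ), l ^ (p-1) * (x/(x+l)) = x * (x ^ (p-1) * Cp p) := by
    rw [← hcomb, ← mul_assoc, mul_inv_cancel₀ hx', one_mul]
  rw [this, show p = (p-1)+1 by ring, Real.rpow_add_one hx']
  ring

lemma byparts {p : ℝ} (hp0 : 0 < p) (hp1 : p < 1) :
    ∫ s in Ioi (0:ℝ), s ^ p / ((1 + s) * (1 + s)) = p * Cp p := by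
  set f' : ℝ → ℝ := fun s => s ^ p / ((1+s)*(1+s)) - p * (s ^ (p-1) * ((1:ℝ)/(1+s))) with hf'
  have hderiv : ∀ s ∈ Ioi (0:ℝ), HasDerivAt (fun s : ℝ => -(s ^ p * (1+s)⁻¹)) (f' s) s := by
    intro s hs
    have hs0 : (0:ℝ) < s := hs
    have h1s : (0:ℝ) < 1 + s := by linarith
    have h1 : HasDerivAt (fun y : ℝ => y ^ p) (p * s ^ (p-1)) s :=
      Real.hasDerivAt_rpow_const (Or.inl hs0.ne')
    have h2 : HasDerivAt (fun y : ℝ => (1+y)⁻¹) (-1 / (1+s)^2) s := by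
      simpa using ((hasDerivAt_id s).const_add 1).fun_inv h1s.ne'
    have h3 := (h1.fun_mul h2).fun_neg
    refine (h3.congr_deriv ?_)
    symm
    have hsp : s ^ (p-1) = s ^ p / s := Real.rpow_sub_one hs0.ne' p
    simp only [hf', hsp]
    field_simp
    ring
  have hcont : ContinuousWithinAt (fun s : ℝ => -(s ^ p * (1+s)⁻¹)) (Ici 0) 0 := by
    apply ContinuousAt.continuousWithinAt
    exact (((cont_rpow p hp0).continuousAt).mul
      ((continuousAt_const.add continuousAt_id).inv₀ (by norm_num))).neg
  have htend : Tendsto (fun s : ℝ => -(s ^ p * (1+s)⁻¹)) atTop (𝓝 0) := by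
    rw [show (0:ℝ) = -0 by norm_num]
    apply Tendsto.neg
    have hlim : Tendsto (fun s : ℝ => s ^ (p-1)) atTop (𝓝 0) := by
      have := tendsto_rpow_neg_atTop (by linarith : (0:ℝ) < 1 - p)
      simpa [show -(1-p) = p - 1 by ring] using this
    apply squeeze_zero_norm' ?_ hlim
    filter_upwards [eventually_ge_atTop (1:ℝ)] with s hs1
    have hs0 : (0:ℝ) < s := lt_of_lt_of_le one_pos hs1
    have h1s : (0:ℝ) < 1 + s := by linarith
    rw [Real.norm_eq_abs, abs_of_nonneg (by positivity)]
    have : (1+s)⁻¹ ≤ s⁻¹ := by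
      apply inv_anti₀ hs0
      linarith
    calc s ^ p * (1+s)⁻¹ ≤ s ^ p * s⁻¹ :=
          mul_le_mul_of_nonneg_left this (Real.rpow_nonneg hs0.le _)
      _ = s ^ (p-1) := by rw [Real.rpow_sub_one hs0.ne']; ring
  have hker := integrable_kernel hp0 hp1 (x := 1) (y := 1) one_pos one_pos
  have hhalf := integrable_half hp0 hp1 (x := 1) one_pos
  have hint : IntegrableOn f' (Ioi 0) := hker.sub (hhalf.const_mul p)
  have h := integral_Ioi_of_hasDerivAt_of_tendsto hcont hderiv hint htend
  have h0 : -((0:ℝ) ^ p * (1+0)⁻¹) = 0 := by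
    rw [Real.zero_rpow hp0.ne']; ring
  rw [h0, sub_zero] at h
  rw [hf'] at h
  rw [integral_sub hker (hhalf.const_mul p), integral_const_mul] at h
  have hCp : ∫ s in Ioi (0:ℝ), s ^ (p-1) * ((1:ℝ)/(1+s)) = Cp p := rfl
  rw [hCp] at h
  linarith

lemma diag_eval {p : ℝ} (hp0 : 0 < p) (hp1 : p < 1) {x : ℝ} (hx : 0 < x) :
    ∫ l in Ioi (0:ℝ), l ^ p / ((x + l) * (x + l)) = p * Cp p * x ^ (p-1) := by
  have hx' : x ≠ 0 := hx.ne'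
  have key : ∫ s in Ioi (0:ℝ), (x*s) ^ p / ((x+x*s)*(x+x*s))
      = x⁻¹ * ∫ l in Ioi (0:ℝ), l ^ p / ((x+l)*(x+l)) := by
    have h := integral_comp_mul_left_Ioi (fun l => l ^ p / ((x+l)*(x+l))) 0 hx
    rw [mul_zero] at h
    simpa [smul_eq_mul] using h
  have key2 : ∫ s in Ioi (0:ℝ), (x*s) ^ p / ((x+x*s)*(x+x*s))
      = x ^ (p-2) * (p * Cp p) := by
    rw [← byparts hp0 hp1, ← integral_const_mul]
    apply setIntegral_congr_fun measurableSet_Ioi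
    intro s hs
    have hs0 : (0:ℝ) < s := hs
    have h1s : (0:ℝ) < 1 + s := by linarith
    show (x*s) ^ p / ((x+x*s)*(x+x*s)) = x ^ (p-2) * (s ^ p / ((1+s)*(1+s)))
    rw [Real.mul_rpow hx.le hs0.le, show x + x * s = x * (1 + s) by ring]
    have hxp2 : x ^ (p-2) = x ^ p / (x * x) := by
      rw [show p - 2 = p - 1 - 1 by ring, Real.rpow_sub_one hx', Real.rpow_sub_one hx']
      ring
    rw [hxp2]
    field_simp
  have hcomb : x⁻¹ * ∫ l in Ioi (0:ℝ), l ^ p / ((x+l)*(x+l)) = x ^ (p-2) * (p * Cp p) := by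
    rw [← key, key2]
  have : ∫ l in Ioi (0:ℝ), l ^ p / ((x+l)*(x+l)) = x * (x ^ (p-2) * (p * Cp p)) := by
    rw [← hcomb, ← mul_assoc, mul_inv_cancel₀ hx', one_mul]
  rw [this, show p - 1 = (p-2)+1 by ring, Real.rpow_add_one hx']
  ring

lemma offdiag_eval {p : ℝ} (hp0 : 0 < p) (hp1 : p < 1) {x y : ℝ} (hx : 0 < x) (hy : 0 < y)
    (hxy : x ≠ y) :
    ∫ l in Ioi (0:ℝ), l ^ p / ((x + l) * (y + l)) = Cp p * (x ^ p - y ^ p) / (x - y) := by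
  have hxy' : x - y ≠ 0 := sub_ne_zero.2 hxy
  have hsub : EqOn (fun l : ℝ => l ^ p / ((x+l)*(y+l)))
      (fun l : ℝ => (x-y)⁻¹ * (l ^ (p-1) * (x/(x+l)) - l ^ (p-1) * (y/(y+l)))) (Ioi 0) := by
    intro l hl
    have hl0 : (0:ℝ) < l := hl
    have h1 : (0:ℝ) < x + l := by linarith
    have h2 : (0:ℝ) < y + l := by linarith
    show l ^ p / ((x+l)*(y+l)) = (x-y)⁻¹ * (l ^ (p-1) * (x/(x+l)) - l ^ (p-1) * (y/(y+l)))
    have hlp : l ^ (p-1) = l ^ p / l := Real.rpow_sub_one hl0.ne' p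
    rw [hlp]
    field_simp
    ring
  rw [setIntegral_congr_fun measurableSet_Ioi hsub, integral_const_mul,
    integral_sub (integrable_half hp0 hp1 hx) (integrable_half hp0 hp1 hy),
    half_eval hp0 hp1 hx, half_eval hp0 hp1 hy]
  field_simp




lemma gram_psd {p : ℝ} (hp0 : 0 < p) (hp1 : p < 1) {n : ℕ} (K : ℝ) (hK : 0 ≤ K)
    (u w : Fin n → ℝ) (hu : ∀ i, 0 < u i) :
    Matrix.PosSemidef (Matrix.of fun i j : Fin n =>
      K * (w i * w j) * ∫ l in Ioi (0:ℝ), l ^ p / ((u i + l) * (u j + l))) := by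
  rw [Matrix.posSemidef_iff_dotProduct_mulVec]
  constructor
  · apply Matrix.ext
    intro i j
    rw [Matrix.conjTranspose_apply, Matrix.of_apply, Matrix.of_apply, star_trivial]
    have hker : (fun l : ℝ => l ^ p / ((u j + l) * (u i + l)))
        = fun l : ℝ => l ^ p / ((u i + l) * (u j + l)) := by
      funext l; rw [mul_comm (u j + l)]
    rw [hker, mul_comm (w j) (w i)]
  · intro x
    set c : Fin n → ℝ := fun i => x i * w i with hc
    set ker : Fin n → Fin n → ℝ → ℝ :=
      fun i j l => c i * c j * (l ^ p / ((u i + l) * (u j + l))) with hkerdef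
    have hint : ∀ i j : Fin n, Integrable (ker i j) (volume.restrict (Ioi 0)) :=
      fun i j => ((integrable_kernel hp0 hp1 (hu i) (hu j)).const_mul _)
    have expand : dotProduct (star x) (Matrix.mulVec (Matrix.of fun i j : Fin n =>
        K * (w i * w j) * ∫ l in Ioi (0:ℝ), l ^ p / ((u i + l) * (u j + l))) x)
        = ∑ i, ∑ j, K * (c i * c j * ∫ l in Ioi (0:ℝ), l ^ p / ((u i + l) * (u j + l))) := by
      simp only [dotProduct, Matrix.mulVec, Matrix.of_apply, star_trivial,
        Finset.mul_sum]
      apply Finset.sum_congr rfl; intro i _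
      apply Finset.sum_congr rfl; intro j _
      rw [hc]; ring
    show 0 ≤ dotProduct (star x) _
    rw [expand]
    have step : ∑ i, ∑ j, K * (c i * c j * ∫ l in Ioi (0:ℝ), l ^ p / ((u i + l) * (u j + l)))
        = K * ∫ l in Ioi (0:ℝ), ∑ i, ∑ j, ker i j l := by
      rw [integral_finset_sum _ (fun i _ => integrable_finset_sum _ (fun j _ => hint i j))]
      rw [Finset.mul_sum]
      apply Finset.sum_congr rfl; intro i _
      rw [integral_finset_sum _ (fun j _ => hint i j), Finset.mul_sum]
      apply Finset.sum_congr rfl; intro j _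
      rw [hkerdef]
      simp only
      rw [integral_const_mul]
    rw [step]
    apply mul_nonneg hK
    apply setIntegral_nonneg measurableSet_Ioi
    intro l hl
    have hl0 : (0:ℝ) < l := hl
    have hsq : ∑ i, ∑ j, ker i j l = l ^ p * (∑ i, c i / (u i + l))^2 := by
      rw [sq, Finset.sum_mul_sum, Finset.mul_sum]
      apply Finset.sum_congr rfl; intro i _
      rw [Finset.mul_sum]
      apply Finset.sum_congr rfl; intro j _
      rw [hkerdef]
      simp only
      rw [div_mul_div_comm]
      ring
    rw [hsq]
    exact mul_nonneg (Real.rpow_nonneg hl0.le _) (sq_nonneg _)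

lemma main_aux {p : ℝ} (hp0 : 0 < p) (hp1 : p < 1) {n : ℕ} (u w : Fin n → ℝ)
    (hu : ∀ i, 0 < u i) (T : Matrix (Fin n) (Fin n) ℝ)
    (h : ∀ i j, T i j = (if u i = u j then w i * w j * u i ^ (p-1)
        else w i * w j * ((u i ^ p - u j ^ p)/(u i - u j)) / p)) :
    T.PosSemidef := by
  have hC := Cp_pos hp0 hp1
  have hK : (0:ℝ) ≤ (p * Cp p)⁻¹ := by positivity
  have hT : T = Matrix.of fun i j => (p * Cp p)⁻¹ * (w i * w j) *
      ∫ l in Ioi (0:ℝ), l ^ p / ((u i + l) * (u j + l)) := by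
    apply Matrix.ext; intro i j
    rw [h i j, Matrix.of_apply]
    by_cases hij : u i = u j
    · rw [if_pos hij, ← hij, diag_eval hp0 hp1 (hu i)]
      field_simp [hp0.ne', hC.ne']
    · rw [if_neg hij, offdiag_eval hp0 hp1 (hu i) (hu j) hij]
      have h3 : u i - u j ≠ 0 := sub_ne_zero.2 hij
      rw [mul_inv]
      field_simp [hp0.ne', hC.ne', h3]
  rw [hT]
  exact gram_psd hp0 hp1 _ hK u w hu


lemma rank_one_psd {n : ℕ} (g : Fin n → ℝ) :
    (Matrix.of fun i j : Fin n => g i * g j).PosSemidef := by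
  rw [Matrix.posSemidef_iff_dotProduct_mulVec]
  constructor
  · apply Matrix.ext
    intro i j
    rw [Matrix.conjTranspose_apply, Matrix.of_apply, Matrix.of_apply, star_trivial, mul_comm]
  · intro x
    have : dotProduct (star x) (Matrix.mulVec (Matrix.of fun i j : Fin n => g i * g j) x)
        = (∑ i, g i * x i) ^ 2 := by
      rw [sq, Finset.sum_mul_sum]
      simp only [dotProduct, Matrix.mulVec, Matrix.of_apply, star_trivial,
        Finset.mul_sum]
      apply Finset.sum_congr rfl; intro i _
      apply Finset.sum_congr rfl; intro j _
      ring
    rw [show dotProduct (star x) _ = (∑ i, g i * x i)^2 from this]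
    exact sq_nonneg _


end Stmt16

theorem stmt_16 (t : ℝ) (ht : 1 / 2 ≤ t) (ht1 : t ≠ 1)
    (n : ℕ) (lam : Fin n → ℝ) (hlam : ∀ i, 0 < lam i) :
    Matrix.PosSemidef (Matrix.of fun i j : Fin n =>
      if lam i = lam j then 1 / lam i
      else (t / (t - 1)) * (lam i ^ (t - 1) - lam j ^ (t - 1)) / (lam i ^ t - lam j ^ t)) := by
  have ht0 : (0:ℝ) < t := by linarith [ht]
  have inj : ∀ {a b : ℝ}, 0 < a → 0 < b → a ^ t = b ^ t → a = b := by
    intro a b ha hb hab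
    rcases lt_trichotomy a b with h|h|h
    · exact absurd hab (ne_of_lt (Real.rpow_lt_rpow ha.le h ht0))
    · exact h
    · exact absurd hab.symm (ne_of_lt (Real.rpow_lt_rpow hb.le h ht0))
  by_cases hhalf : t = 1/2
  · subst hhalf
    have hM : (Matrix.of fun i j : Fin n =>
        if lam i = lam j then 1 / lam i
        else ((1/2:ℝ) / ((1/2) - 1)) * (lam i ^ ((1/2:ℝ) - 1) - lam j ^ ((1/2:ℝ) - 1)) /
          (lam i ^ (1/2:ℝ) - lam j ^ (1/2:ℝ)))
        = Matrix.of fun i j : Fin n => lam i ^ (-(1/2):ℝ) * lam j ^ (-(1/2):ℝ) := by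
      apply Matrix.ext
      intro i j
      rw [Matrix.of_apply, Matrix.of_apply]
      by_cases hij : lam i = lam j
      · rw [if_pos hij, ← hij, ← Real.rpow_add (hlam i)]
        norm_num [Real.rpow_neg_one]
      · rw [if_neg hij]
        have hx := hlam i
        have hy := hlam j
        have hxy : lam i ^ ((1/2):ℝ) ≠ lam j ^ ((1/2):ℝ) := by
          intro h
          apply hij
          have h2 := congrArg (fun z : ℝ => z ^ (2:ℝ)) h
          simp only [← Real.rpow_mul hx.le, ← Real.rpow_mul hy.le] at h2
          norm_num at h2
          exact h2
        have e1 : lam i ^ ((1/2:ℝ) - 1) = (lam i ^ ((1/2):ℝ))⁻¹ := by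
          rw [show (1/2:ℝ) - 1 = -(1/2) by norm_num, Real.rpow_neg hx.le]
        have e2 : lam j ^ ((1/2:ℝ) - 1) = (lam j ^ ((1/2):ℝ))⁻¹ := by
          rw [show (1/2:ℝ) - 1 = -(1/2) by norm_num, Real.rpow_neg hy.le]
        have e3 : lam i ^ (-(1/2):ℝ) = (lam i ^ ((1/2):ℝ))⁻¹ := by
          rw [Real.rpow_neg hx.le]
        have e4 : lam j ^ (-(1/2):ℝ) = (lam j ^ ((1/2):ℝ))⁻¹ := by
          rw [Real.rpow_neg hy.le]
        rw [e1, e2, e3, e4]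
        set a := lam i ^ ((1/2):ℝ) with ha
        set b := lam j ^ ((1/2):ℝ) with hb
        have ha0 : 0 < a := Real.rpow_pos_of_pos hx _
        have hb0 : 0 < b := Real.rpow_pos_of_pos hy _
        have hab : a - b ≠ 0 := sub_ne_zero.2 hxy
        field_simp
        ring
    rw [hM]
    exact Stmt16.rank_one_psd _
  · have ht2 : 1/2 < t := lt_of_le_of_ne ht (Ne.symm hhalf)
    by_cases hlt : t < 1
    · -- 1/2 < t < 1
      set p : ℝ := (1 - t)/t with hp
      have hp0 : 0 < p := div_pos (by linarith) ht0
      have hp1 : p < 1 := by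
        rw [hp, div_lt_one ht0]; linarith
      apply Stmt16.main_aux hp0 hp1 (fun i => lam i ^ t) (fun i => lam i ^ (t-1))
        (fun i => Real.rpow_pos_of_pos (hlam i) t)
      intro i j
      rw [Matrix.of_apply]
      have hx := hlam i
      have hy := hlam j
      by_cases hij : lam i = lam j
      · rw [if_pos hij, if_pos (by rw [hij]), ← hij]
        have e : (lam i ^ t) ^ (p - 1) = lam i ^ (t * (p - 1)) :=
          (Real.rpow_mul hx.le t (p-1)).symm
        rw [e, ← Real.rpow_add hx, ← Real.rpow_add hx]
        have : t - 1 + (t - 1) + t * (p - 1) = -1 := by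
          rw [hp]; field_simp; ring
        rw [this, Real.rpow_neg_one]
        exact one_div _
      · have huij : lam i ^ t ≠ lam j ^ t := fun h => hij (inj hx hy h)
        rw [if_neg hij, if_neg huij]
        have e1 : (lam i ^ t) ^ p = (lam i ^ (t-1))⁻¹ := by
          rw [← Real.rpow_mul hx.le, show t * p = -(t-1) by rw [hp]; field_simp; ring,
            Real.rpow_neg hx.le]
        have e2 : (lam j ^ t) ^ p = (lam j ^ (t-1))⁻¹ := by
          rw [← Real.rpow_mul hy.le, show t * p = -(t-1) by rw [hp]; field_simp; ring,
            Real.rpow_neg hy.le]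
        rw [e1, e2]
        set A := lam i ^ (t-1) with hA
        set B := lam j ^ (t-1) with hB
        have hA0 : 0 < A := Real.rpow_pos_of_pos hx _
        have hB0 : 0 < B := Real.rpow_pos_of_pos hy _
        have hD : lam i ^ t - lam j ^ t ≠ 0 := sub_ne_zero.2 huij
        have ht1' : t - 1 ≠ 0 := sub_ne_zero.2 ht1
        have hpne : p ≠ 0 := hp0.ne'
        have h1t : (1:ℝ) - t ≠ 0 := by intro h; apply ht1; linarith
        rw [hp]
        field_simp [ht0.ne', ht1', h1t, hD, hA0.ne', hB0.ne']
        ring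
    · -- t > 1
      have hgt : 1 < t := by
        rcases lt_or_eq_of_le (not_lt.1 hlt) with h | h
        · exact h
        · exact absurd h.symm ht1
      set p : ℝ := (t - 1)/t with hp
      have hp0 : 0 < p := div_pos (by linarith) ht0
      have hp1 : p < 1 := by
        rw [hp, div_lt_one ht0]; linarith
      apply Stmt16.main_aux hp0 hp1 (fun i => lam i ^ t) (fun _ => (1:ℝ))
        (fun i => Real.rpow_pos_of_pos (hlam i) t)
      intro i j
      rw [Matrix.of_apply]
      have hx := hlam i
      have hy := hlam j
      by_cases hij : lam i = lam j
      · rw [if_pos hij, if_pos (by rw [hij])]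
        have e : (lam i ^ t) ^ (p - 1) = lam i ^ (t * (p - 1)) :=
          (Real.rpow_mul hx.le t (p-1)).symm
        rw [e, one_mul, one_mul]
        have : t * (p - 1) = -1 := by
          rw [hp]; field_simp; ring
        rw [this, Real.rpow_neg_one]
        exact one_div _
      · have huij : lam i ^ t ≠ lam j ^ t := fun h => hij (inj hx hy h)
        rw [if_neg hij, if_neg huij]
        have e1 : (lam i ^ t) ^ p = lam i ^ (t-1) := by
          rw [← Real.rpow_mul hx.le, show t * p = t - 1 by rw [hp]; field_simp]
        have e2 : (lam j ^ t) ^ p = lam j ^ (t-1) := by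
          rw [← Real.rpow_mul hy.le, show t * p = t - 1 by rw [hp]; field_simp]
        rw [e1, e2, one_mul, one_mul]
        have hD : lam i ^ t - lam j ^ t ≠ 0 := sub_ne_zero.2 huij
        have ht1' : t - 1 ≠ 0 := sub_ne_zero.2 ht1
        have hpne : p ≠ 0 := hp0.ne'
        rw [hp]
        field_simp [ht0.ne', ht1', hD]
end

section
/- For 0 ≤ t ≤ 1, the function f_t(x) = 2(tx+1)(t+x)/((1+t)²(x+1)) satisfies f_t(x) ≥ √x for all x > 0 if and only if 3 − 2√2 ≤ t. -/
theorem stmt_17 (t : ℝ) (ht0 : 0 ≤ t) (ht1 : t ≤ 1) :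
    (∀ x : ℝ, 0 < x →
        Real.sqrt x ≤ 2 * (t * x + 1) * (t + x) / ((1 + t) ^ 2 * (x + 1))) ↔
      3 - 2 * Real.sqrt 2 ≤ t := by
  have hs2 : Real.sqrt 2 ^ 2 = 2 := Real.sq_sqrt (by norm_num)
  have hs2pos : 0 < Real.sqrt 2 := Real.sqrt_pos.mpr (by norm_num)
  constructor
  · intro h
    by_contra hc
    push_neg at hc
    -- hc : t < 3 - 2√2, so (1-t)^2 > 4t
    have h4t : 4 * t < (1 - t) ^ 2 := by nlinarith [sq_nonneg (t - 3 + 2 * Real.sqrt 2)]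
    rcases eq_or_lt_of_le ht0 with h0 | h0
    · -- t = 0 : take x = 4
      have h4 := h 4 (by norm_num)
      rw [show (4 : ℝ) = 2 ^ 2 by norm_num, Real.sqrt_sq (by norm_num)] at h4
      rw [← h0] at h4
      norm_num at h4
    · -- t > 0 : take x = y^2 with y = (1-t)^2/(4t) > 1
      set y : ℝ := (1 - t) ^ 2 / (4 * t) with hy
      have hy1 : 1 < y := (one_lt_div (by linarith)).mpr h4t
      have hyeq : (1 - t) ^ 2 = 4 * t * y := by
        rw [hy]; field_simp [h0.ne']
      have hx := h (y ^ 2) (by positivity)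
      rw [Real.sqrt_sq (by linarith)] at hx
      have hD : 0 < (1 + t) ^ 2 * (y ^ 2 + 1) := by positivity
      rw [le_div_iff₀ hD] at hx
      have key : 2 * (t * y ^ 2 + 1) * (t + y ^ 2) - y * ((1 + t) ^ 2 * (y ^ 2 + 1))
          = (y - 1) ^ 2 * (2 * t * y ^ 2 - (1 - t) ^ 2 * y + 2 * t) := by ring
      have key2 : 2 * t * y ^ 2 - (1 - t) ^ 2 * y + 2 * t = 2 * t * (1 - y ^ 2) := by
        rw [hyeq]; ring
      rw [key2] at key
      nlinarith [mul_pos h0 (mul_pos (by nlinarith : (0:ℝ) < (y-1)^2) (by nlinarith : (0:ℝ) < y^2 - 1))]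
  · intro h2 x hx
    have h4t : (1 - t) ^ 2 ≤ 4 * t := by
      nlinarith [sq_nonneg (Real.sqrt 2 - 1)]
    set y : ℝ := Real.sqrt x with hy
    have hy0 : 0 ≤ y := Real.sqrt_nonneg x
    have hy2 : y ^ 2 = x := Real.sq_sqrt hx.le
    have hD : 0 < (1 + t) ^ 2 * (x + 1) := by positivity
    rw [le_div_iff₀ hD]
    rw [← hy2]
    nlinarith [mul_nonneg (mul_nonneg ht0 (sq_nonneg (y - 1))) (sq_nonneg (y - 1)),
      mul_nonneg (mul_nonneg (by linarith : (0:ℝ) ≤ 4 * t - (1 - t) ^ 2) hy0) (sq_nonneg (y - 1))]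
end
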